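/- arXiv:1802.06885 — 10 statements merged into one kernel-verified Lean document; each statement's English description precedes it below -/
import Mathlib

section
/- Let f : ℝⁿ → ℝ be of class C² in a neighborhood of x̄ with all coordinates positive, suppose p̄ᵢ + λ̄·∂f/∂xᵢ(x̄) = 0 for all i with p̄ having all positive coordinates, f(x̄) = ȳ, and the determinant F of the bordered Hessian of f at x̄ is nonzero. Let φ : V → W be a C¹ map on a neighborhood V of (p̄, ȳ) such that for (p,y) ∈ V, φ(p,y) = (λ(p,y), x(p,y)) is the unique point in W satisfying pᵢ + λ·fᵢ(x) = 0 for all i and f(x) = y. Then for all i, j = 1,…,n, the partial derivative of the i-th coordinate function xᵢ(p,y) with respect to p_j at (p̄, ȳ) equals −F_{ij}/(λ̄·F), where F is the determinant of the bordered Hessian of f at x̄ and F_{ij} is the cofactor of the entry f_{ij} in the bordered Hessian. -/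
/-- Partial derivative of `f : ℝⁿ → ℝ` with respect to the `i`-th variable. -/
noncomputable def pderiv1 (n : ℕ) (f : (Fin n → ℝ) → ℝ) (i : Fin n) (x : Fin n → ℝ) : ℝ :=
  fderiv ℝ f x (Pi.single i 1)

/-- Second partial derivative `f_{ij}` of `f : ℝⁿ → ℝ`. -/
noncomputable def pderiv2 (n : ℕ) (f : (Fin n → ℝ) → ℝ) (i j : Fin n) (x : Fin n → ℝ) : ℝ :=
  pderiv1 n (pderiv1 n f j) i x

/-- The bordered Hessian of `f` at `x`: the `(n+1) × (n+1)` matrix with `(0,0)` entry `0`,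
the rest of row 0 and column 0 given by the gradient of `f`, and lower-right `n × n`
block the Hessian of `f`. -/
noncomputable def borderedHessian (n : ℕ) (f : (Fin n → ℝ) → ℝ) (x : Fin n → ℝ) :
    Matrix (Fin (n + 1)) (Fin (n + 1)) ℝ :=
  Matrix.of fun i j =>
    Fin.cases
      (Fin.cases (0 : ℝ) (fun j' => pderiv1 n f j' x) j)
      (fun i' => Fin.cases (pderiv1 n f i' x) (fun j' => pderiv2 n f i' j' x) j) i

/-- The cofactor of the `(i,j)` entry of an `(m+1) × (m+1)` real matrix. -/
noncomputable def cofactor {m : ℕ} (M : Matrix (Fin (m + 1)) (Fin (m + 1)) ℝ)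
    (i j : Fin (m + 1)) : ℝ :=
  (-1 : ℝ) ^ ((i : ℕ) + (j : ℕ)) * (M.submatrix i.succAbove j.succAbove).det

/-- The Allen elasticity of substitution of factors `i` and `j` at `x`. -/
noncomputable def AES (n : ℕ) (f : (Fin n → ℝ) → ℝ) (x : Fin n → ℝ) (i j : Fin n) : ℝ :=
  ((∑ k, x k * pderiv1 n f k x) / (x i * x j)) *
    (cofactor (borderedHessian n f x) i.succ j.succ / (borderedHessian n f x).det)

open Filter

open Matrix

private lemma clm_expand {n : ℕ} (L : (Fin n → ℝ) →L[ℝ] ℝ) (w : Fin n → ℝ) :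
    L w = ∑ k, w k * L (Pi.single k 1) := by
  have h : w = ∑ k, w k • (Pi.single k 1 : Fin n → ℝ) := by
    funext a
    simp [Finset.sum_apply, Pi.single_apply]
  conv_lhs => rw [h]
  rw [map_sum]
  simp [smul_eq_mul]


/-- **Corollary: derivative of input demand with respect to prices.**
`∂xᵢ/∂p_j (p̄, ȳ) = −F_{ij}/(λ̄ F)`, where `F` is the determinant of the bordered Hessian
of `f` at `x̄` and `F_{ij}` the cofactor of the Hessian entry `f_{ij}` in it. -/
theorem input_demand_price_derivative (n : ℕ) (f : (Fin n → ℝ) → ℝ)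
    (xbar pbar : Fin n → ℝ) (lbar ybar : ℝ)
    (hxpos : ∀ i, 0 < xbar i) (hppos : ∀ i, 0 < pbar i)
    (hC2 : ∀ᶠ z in nhds xbar, ContDiffAt ℝ 2 f z)
    (hcrit : ∀ i, pbar i + lbar * pderiv1 n f i xbar = 0)
    (hout : f xbar = ybar)
    (hF : (borderedHessian n f xbar).det ≠ 0)
    (V : Set ((Fin n → ℝ) × ℝ)) (W : Set (ℝ × (Fin n → ℝ)))
    (φ : (Fin n → ℝ) × ℝ → ℝ × (Fin n → ℝ))
    (hV : IsOpen V) (hW : IsOpen W)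
    (hVmem : (pbar, ybar) ∈ V) (hWmem : (lbar, xbar) ∈ W)
    (hφ : ContDiffOn ℝ 1 φ V) (hmaps : Set.MapsTo φ V W)
    (huniq : ∀ p y, (p, y) ∈ V → ∀ l x, (l, x) ∈ W →
      (((∀ i, p i + l * pderiv1 n f i x = 0) ∧ f x = y) ↔ (l, x) = φ (p, y)))
    :
    ∀ i j : Fin n,
      fderiv ℝ (fun z => (φ z).2 i) (pbar, ybar) (Pi.single j 1, 0) =
        -(cofactor (borderedHessian n f xbar) i.succ j.succ /
          (lbar * (borderedHessian n f xbar).det)) := by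
  intro i j
  set z0 : (Fin n → ℝ) × ℝ := (pbar, ybar) with hz0
  have hφbar : (lbar, xbar) = φ z0 :=
    (huniq pbar ybar hVmem lbar xbar hWmem).mp ⟨hcrit, hout⟩
  have hφ1 : (φ z0).1 = lbar := by rw [← hφbar]
  have hφ2 : (φ z0).2 = xbar := by rw [← hφbar]
  have hlbar : lbar ≠ 0 := by
    intro h
    have h1 := hcrit i
    rw [h, zero_mul, add_zero] at h1
    exact (hppos i).ne' h1
  -- regularity of f near xbar
  obtain ⟨U, hU, hUo, hxU⟩ := eventually_nhds_iff.mp hC2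
  have hfC2 : ContDiffOn ℝ 2 f U := fun z hz => (hU z hz).contDiffWithinAt
  have hDf' : DifferentiableAt ℝ (fderiv ℝ f) xbar := by
    have h1 : ContDiffOn ℝ 1 (fderiv ℝ f) U := hfC2.fderiv_of_isOpen hUo (by norm_num)
    exact ((h1 xbar hxU).differentiableWithinAt one_ne_zero).differentiableAt (hUo.mem_nhds hxU)
  have hfdiff : DifferentiableAt ℝ f xbar := (hU xbar hxU).differentiableAt (by norm_num)
  have hgdiff : ∀ k : Fin n, DifferentiableAt ℝ (pderiv1 n f k) xbar := by
    intro k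
    have h : DifferentiableAt ℝ (fun x => fderiv ℝ f x (Pi.single k 1)) xbar :=
      hDf'.clm_apply (differentiableAt_const _)
    exact h
  have hsnd : ∀ a b : Fin n,
      pderiv2 n f a b xbar = fderiv ℝ (fderiv ℝ f) xbar (Pi.single a 1) (Pi.single b 1) := by
    intro a b
    show fderiv ℝ (fun x => fderiv ℝ f x (Pi.single b 1)) xbar (Pi.single a 1) = _
    rw [fderiv_clm_apply hDf' (differentiableAt_const _)]
    simp
  have hsymm : ∀ a b : Fin n, pderiv2 n f a b xbar = pderiv2 n f b a xbar := by
    intro a b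
    rw [hsnd a b, hsnd b a]
    exact (hU xbar hxU).isSymmSndFDerivAt (by simp [minSmoothness_of_isRCLikeNormedField]) _ _
  -- differentiability of φ
  have hφdiff : DifferentiableAt ℝ φ z0 :=
    ((hφ.differentiableOn one_ne_zero) _ hVmem).differentiableAt (hV.mem_nhds hVmem)
  have hxmap : DifferentiableAt ℝ (fun z => (φ z).2) z0 := hφdiff.snd
  have hlmap : DifferentiableAt ℝ (fun z => (φ z).1) z0 := hφdiff.fst
  have hxk : ∀ k, DifferentiableAt ℝ (fun z => (φ z).2 k) z0 :=
    fun k => differentiableAt_pi.mp hxmap k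
  set v : (Fin n → ℝ) × ℝ := (Pi.single j 1, (0 : ℝ)) with hv
  set dl : ℝ := fderiv ℝ (fun z => (φ z).1) z0 v with hdl
  set dx : Fin n → ℝ := fun k => fderiv ℝ (fun z => (φ z).2 k) z0 v with hdx
  have hDxmap : fderiv ℝ (fun z => (φ z).2) z0 v = dx := by
    have h : (fun z => (φ z).2) = fun z k => (φ z).2 k := rfl
    rw [h, fderiv_pi hxk]
    rfl
  -- chain rule for scalar functions of x(p,y)
  have hchain : ∀ g : (Fin n → ℝ) → ℝ, DifferentiableAt ℝ g xbar →
      fderiv ℝ (fun z => g ((φ z).2)) z0 v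
        = ∑ k, dx k * fderiv ℝ g xbar (Pi.single k 1) := by
    intro g hg
    have hgx : DifferentiableAt ℝ g ((fun z => (φ z).2) z0) := by
      show DifferentiableAt ℝ g (φ z0).2
      rw [hφ2]; exact hg
    have hc : fderiv ℝ (fun z => g ((φ z).2)) z0 v
        = fderiv ℝ g ((φ z0).2) (fderiv ℝ (fun z => (φ z).2) z0 v) := by
      rw [show (fun z => g ((φ z).2)) = g ∘ (fun z => (φ z).2) from rfl,
        fderiv_comp z0 hgx hxmap]
      rfl
    rw [hc, hDxmap, hφ2, clm_expand]
  -- the defining equations hold on V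
  have heqV : ∀ z ∈ V,
      (∀ k, z.1 k + (φ z).1 * pderiv1 n f k ((φ z).2) = 0) ∧ f ((φ z).2) = z.2 := by
    intro z hz
    exact (huniq z.1 z.2 (by simpa using hz) (φ z).1 (φ z).2 (by simpa using hmaps hz)).mpr
      (by simp)
  have hVn : V ∈ nhds z0 := hV.mem_nhds hVmem
  -- key equation A
  have keyA : ∀ a : Fin n,
      (Pi.single j 1 : Fin n → ℝ) a + (dl * pderiv1 n f a xbar
        + lbar * ∑ k, dx k * pderiv2 n f a k xbar) = 0 := by
    intro a
    have hga : DifferentiableAt ℝ (pderiv1 n f a) (φ z0).2 := by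
      rw [hφ2]; exact hgdiff a
    have hgx : DifferentiableAt ℝ (fun z => pderiv1 n f a ((φ z).2)) z0 :=
      by have := hga.comp z0 hxmap; exact this
    have hBd : DifferentiableAt ℝ (fun z => (φ z).1 * pderiv1 n f a ((φ z).2)) z0 :=
      hlmap.mul hgx
    have L1 : ((Fin n → ℝ) × ℝ) →L[ℝ] ℝ :=
      (ContinuousLinearMap.proj a).comp (ContinuousLinearMap.fst ℝ (Fin n → ℝ) ℝ)
    have hAd : DifferentiableAt ℝ (fun z : (Fin n → ℝ) × ℝ => z.1 a) z0 :=
      ((ContinuousLinearMap.proj a).comp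
        (ContinuousLinearMap.fst ℝ (Fin n → ℝ) ℝ)).differentiableAt
    have hzero : fderiv ℝ (fun z => z.1 a + (φ z).1 * pderiv1 n f a ((φ z).2)) z0 = 0 := by
      have hev : (fun z => z.1 a + (φ z).1 * pderiv1 n f a ((φ z).2))
          =ᶠ[nhds z0] (fun _ => (0 : ℝ)) := by
        filter_upwards [hVn] with z hz using (heqV z hz).1 a
      rw [hev.fderiv_eq]
      exact fderiv_const_apply 0
    have h1 : fderiv ℝ (fun z : (Fin n → ℝ) × ℝ => z.1 a) z0 v = (Pi.single j 1 : Fin n → ℝ) a := by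
      have h : fderiv ℝ (fun z : (Fin n → ℝ) × ℝ => z.1 a) z0
          = ((ContinuousLinearMap.proj a).comp (ContinuousLinearMap.fst ℝ (Fin n → ℝ) ℝ)) :=
        (((ContinuousLinearMap.proj a).comp
          (ContinuousLinearMap.fst ℝ (Fin n → ℝ) ℝ)).hasFDerivAt).fderiv
      rw [h]
      rfl
    have hc' : fderiv ℝ (fun z => pderiv1 n f a ((φ z).2)) z0 v
        = ∑ k, dx k * pderiv2 n f a k xbar := by
      rw [hchain (pderiv1 n f a) (hgdiff a)]
      exact Finset.sum_congr rfl fun k _ => by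
        rw [show fderiv ℝ (pderiv1 n f a) xbar (Pi.single k 1) = pderiv2 n f k a xbar from rfl,
          hsymm k a]
    have h2 : fderiv ℝ (fun z => (φ z).1 * pderiv1 n f a ((φ z).2)) z0 v
        = dl * pderiv1 n f a xbar + lbar * ∑ k, dx k * pderiv2 n f a k xbar := by
      rw [fderiv_fun_mul hlmap hgx]
      simp only [ContinuousLinearMap.add_apply, ContinuousLinearMap.coe_smul',
        Pi.smul_apply, smul_eq_mul]
      rw [hc', hφ1, hφ2]
      ring
    have h0 : fderiv ℝ (fun z => z.1 a + (φ z).1 * pderiv1 n f a ((φ z).2)) z0 v = 0 := by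
      rw [hzero]; simp
    rw [fderiv_fun_add hAd hBd, ContinuousLinearMap.add_apply, h1, h2] at h0
    exact h0
  -- key equation B
  have keyB : ∑ k, dx k * pderiv1 n f k xbar = 0 := by
    have hfa : DifferentiableAt ℝ f (φ z0).2 := by rw [hφ2]; exact hfdiff
    have hfx : DifferentiableAt ℝ (fun z => f ((φ z).2)) z0 := hfa.comp z0 hxmap
    have hsnd' : DifferentiableAt ℝ (fun z : (Fin n → ℝ) × ℝ => z.2) z0 :=
      (ContinuousLinearMap.snd ℝ (Fin n → ℝ) ℝ).differentiableAt
    have hzero : fderiv ℝ (fun z => f ((φ z).2) - z.2) z0 = 0 := by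
      have hev : (fun z => f ((φ z).2) - z.2) =ᶠ[nhds z0] (fun _ => (0 : ℝ)) := by
        filter_upwards [hVn] with z hz
        rw [(heqV z hz).2, sub_self]
      rw [hev.fderiv_eq]
      exact fderiv_const_apply 0
    have h0 : fderiv ℝ (fun z => f ((φ z).2) - z.2) z0 v = 0 := by rw [hzero]; simp
    rw [fderiv_fun_sub hfx hsnd', ContinuousLinearMap.sub_apply] at h0
    have h1 : fderiv ℝ (fun z : (Fin n → ℝ) × ℝ => z.2) z0 v = 0 := by
      have h : fderiv ℝ (fun z : (Fin n → ℝ) × ℝ => z.2) z0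
          = ContinuousLinearMap.snd ℝ (Fin n → ℝ) ℝ :=
        ((ContinuousLinearMap.snd ℝ (Fin n → ℝ) ℝ).hasFDerivAt).fderiv
      rw [h]
      rfl
    rw [h1, hchain f hfdiff, sub_zero] at h0
    exact h0
  -- matrix entries
  have hB00 : borderedHessian n f xbar 0 0 = 0 := by simp [borderedHessian]
  have hB0s : ∀ k : Fin n, borderedHessian n f xbar 0 k.succ = pderiv1 n f k xbar := by
    intro k; simp [borderedHessian]
  have hBs0 : ∀ k : Fin n, borderedHessian n f xbar k.succ 0 = pderiv1 n f k xbar := by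
    intro k; simp [borderedHessian]
  have hBss : ∀ a b : Fin n, borderedHessian n f xbar a.succ b.succ = pderiv2 n f a b xbar := by
    intro a b; simp [borderedHessian]
  set M := borderedHessian n f xbar with hM
  have hBsymmT : M.transpose = M := by
    ext a b
    rw [Matrix.transpose_apply]
    induction b using Fin.cases with
    | zero =>
      induction a using Fin.cases with
      | zero => rfl
      | succ a' => rw [hB0s, hBs0]
    | succ b' =>
      induction a using Fin.cases with
      | zero => rw [hBs0, hB0s]
      | succ a' => rw [hBss, hBss]; exact hsymm b' a'
  set vv : Fin (n + 1) → ℝ := Fin.cons (dl / lbar) dx with hvv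
  have hdot : ∀ a, (M *ᵥ vv) a = M a 0 * (dl / lbar) + ∑ k, M a k.succ * dx k := by
    intro a
    simp [Matrix.mulVec, dotProduct, Fin.sum_univ_succ, hvv]
  have hMv : M *ᵥ vv = Pi.single j.succ (-lbar⁻¹) := by
    funext a
    rw [hdot]
    induction a using Fin.cases with
    | zero =>
      have hs : ∑ k, M 0 k.succ * dx k = 0 := by
        rw [show ∑ k, M 0 k.succ * dx k = ∑ k, dx k * pderiv1 n f k xbar from
          Finset.sum_congr rfl fun k _ => by rw [hB0s]; ring]
        exact keyB
      rw [hB00, hs, Pi.single_eq_of_ne (Fin.succ_ne_zero j).symm]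
      ring
    | succ a =>
      have e1 : ∑ k, M a.succ k.succ * dx k = ∑ k, dx k * pderiv2 n f a k xbar :=
        Finset.sum_congr rfl fun k _ => by rw [hBss]; ring
      have e2 : (Pi.single j.succ (-lbar⁻¹) : Fin (n + 1) → ℝ) a.succ
          = -((Pi.single j 1 : Fin n → ℝ) a) * lbar⁻¹ := by
        rcases eq_or_ne a j with h | h
        · subst h; simp
        · rw [Pi.single_eq_of_ne h, Pi.single_eq_of_ne (fun hc => h (Fin.succ_injective n hc))]
          ring
      rw [hBs0, e1, e2]
      have hk := keyA a
      field_simp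
      linarith [hk]
  have hdetv : M.det • vv = M.adjugate *ᵥ Pi.single j.succ (-lbar⁻¹) := by
    rw [← hMv, Matrix.mulVec_mulVec, Matrix.adjugate_mul, Matrix.smul_mulVec,
      Matrix.one_mulVec]
  have hent := congrFun hdetv i.succ
  have hadj : M.adjugate i.succ j.succ = cofactor M i.succ j.succ := by
    rw [Matrix.adjugate_fin_succ_eq_det_submatrix]
    have hsub : M.submatrix (Fin.succAbove j.succ) (Fin.succAbove i.succ)
        = (M.submatrix (Fin.succAbove i.succ) (Fin.succAbove j.succ)).transpose := by
      rw [Matrix.transpose_submatrix, hBsymmT]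
    rw [hsub, Matrix.det_transpose, cofactor, add_comm]
  have hfinal : M.det * dx i = cofactor M i.succ j.succ * (-lbar⁻¹) := by
    simpa [Fin.cons_succ, hadj, hvv] using hent
  show dx i = -(cofactor M i.succ j.succ / (lbar * M.det))
  field_simp at hfinal ⊢
  linarith
end

section
/- Let f : ℝⁿ → ℝ be of class C² in a neighborhood of x̄ with all coordinates positive, suppose p̄ᵢ + λ̄·∂f/∂xᵢ(x̄) = 0 for all i with p̄ having all positive coordinates, f(x̄) = ȳ, and the determinant of the bordered Hessian of f at x̄ is nonzero. Let φ = (λ(·,·), x(·,·)) : V → W be a C¹ map on a neighborhood V of (p̄, ȳ) such that for (p,y) ∈ V, φ(p,y) is the unique point (λ, x) in W satisfying pᵢ + λ·fᵢ(x) = 0 for all i and f(x) = y, and define the cost function C(p, y) = Σᵢ pᵢ·xᵢ(p, y) on V. Then at (p̄, ȳ): ∂C/∂pᵢ(p̄, ȳ) = x̄ᵢ for every i = 1,…,n, and ∂C/∂y(p̄, ȳ) = −λ̄. -/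
open Filter

/-- **envelope theorem / Shephard's lemma for the cost function.**
With `C(p,y) = Σᵢ pᵢ xᵢ(p,y)`, one has `∂C/∂pᵢ(p̄,ȳ) = x̄ᵢ` and `∂C/∂y(p̄,ȳ) = −λ̄`. -/
theorem cost_function_first_derivatives (n : ℕ) (f : (Fin n → ℝ) → ℝ)
    (xbar pbar : Fin n → ℝ) (lbar ybar : ℝ)
    (hxpos : ∀ i, 0 < xbar i) (hppos : ∀ i, 0 < pbar i)
    (hC2 : ∀ᶠ z in nhds xbar, ContDiffAt ℝ 2 f z)
    (hcrit : ∀ i, pbar i + lbar * pderiv1 n f i xbar = 0)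
    (hout : f xbar = ybar)
    (hF : (borderedHessian n f xbar).det ≠ 0)
    (V : Set ((Fin n → ℝ) × ℝ)) (W : Set (ℝ × (Fin n → ℝ)))
    (φ : (Fin n → ℝ) × ℝ → ℝ × (Fin n → ℝ))
    (hV : IsOpen V) (hW : IsOpen W)
    (hVmem : (pbar, ybar) ∈ V) (hWmem : (lbar, xbar) ∈ W)
    (hφ : ContDiffOn ℝ 1 φ V) (hmaps : Set.MapsTo φ V W)
    (huniq : ∀ p y, (p, y) ∈ V → ∀ l x, (l, x) ∈ W →
      (((∀ i, p i + l * pderiv1 n f i x = 0) ∧ f x = y) ↔ (l, x) = φ (p, y)))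
    (C : (Fin n → ℝ) × ℝ → ℝ)
    (hC : ∀ z, C z = ∑ i, z.1 i * (φ z).2 i) :
    (∀ i, fderiv ℝ C (pbar, ybar) (Pi.single i 1, 0) = xbar i) ∧
      fderiv ℝ C (pbar, ybar) (0, 1) = -lbar := by
  classical
  have hVnhds : V ∈ nhds (pbar, ybar) := hV.mem_nhds hVmem
  have hφeq : (lbar, xbar) = φ (pbar, ybar) :=
    (huniq pbar ybar hVmem lbar xbar hWmem).mp ⟨hcrit, hout⟩
  have hφd : DifferentiableAt ℝ φ (pbar, ybar) :=
    (hφ.contDiffAt hVnhds).differentiableAt (by norm_num)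
  set Dφ := fderiv ℝ φ (pbar, ybar) with hDφ
  have hφd' : HasFDerivAt φ Dφ (pbar, ybar) := hφd.hasFDerivAt
  set Dx : ((Fin n → ℝ) × ℝ) →L[ℝ] (Fin n → ℝ) :=
    (ContinuousLinearMap.snd ℝ ℝ (Fin n → ℝ)).comp Dφ with hDxdef
  have hx : HasFDerivAt (fun z => (φ z).2) Dx (pbar, ybar) := hφd'.snd
  have hf2 : ContDiffAt ℝ 2 f xbar := hC2.self_of_nhds
  have hfd : DifferentiableAt ℝ f xbar := hf2.differentiableAt (by norm_num)
  -- constraint f (x(p,y)) = y on V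
  have hconstr : ∀ z ∈ V, f (φ z).2 = z.2 := by
    intro z hz
    have h := (huniq z.1 z.2 (by simpa using hz) (φ z).1 (φ z).2
      (hmaps hz)).mpr (by simp)
    exact h.2
  -- derivative of f ∘ x is snd
  have hx2 : (φ (pbar, ybar)).2 = xbar := by rw [← hφeq]
  have hcomp : HasFDerivAt (fun z => f ((φ z).2)) ((fderiv ℝ f xbar).comp Dx)
      (pbar, ybar) := by
    have hf' : HasFDerivAt f (fderiv ℝ f xbar) ((φ (pbar, ybar)).2) := by
      rw [hx2]; exact hfd.hasFDerivAt
    exact hf'.comp (pbar, ybar) hx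
  have heq : (fun z => f ((φ z).2)) =ᶠ[nhds (pbar, ybar)]
      (fun z : (Fin n → ℝ) × ℝ => z.2) :=
    Filter.eventuallyEq_of_mem hVnhds hconstr
  have hsnd : HasFDerivAt (fun z : (Fin n → ℝ) × ℝ => z.2)
      ((fderiv ℝ f xbar).comp Dx) (pbar, ybar) :=
    hcomp.congr_of_eventuallyEq heq.symm
  have huniqD : (fderiv ℝ f xbar).comp Dx = ContinuousLinearMap.snd ℝ (Fin n → ℝ) ℝ :=
    hsnd.unique hasFDerivAt_snd
  have hfx : ∀ v : (Fin n → ℝ) × ℝ, fderiv ℝ f xbar (Dx v) = v.2 := by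
    intro v
    have := congrArg (fun L : ((Fin n → ℝ) × ℝ) →L[ℝ] ℝ => L v) huniqD
    simpa using this
  -- expand a linear functional on ℝⁿ as a sum over the canonical basis
  have Lsum : ∀ (u : Fin n → ℝ),
      fderiv ℝ f xbar u = ∑ j, u j * fderiv ℝ f xbar (Pi.single j 1) := by
    intro u
    have := (fderiv ℝ f xbar : (Fin n → ℝ) →ₗ[ℝ] ℝ).pi_apply_eq_sum_univ u
    simp only [ContinuousLinearMap.coe_coe] at this
    rw [this]
    refine Finset.sum_congr rfl fun j _ => ?_
    rw [smul_eq_mul]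
    congr 2
    funext k
    simp [Pi.single_apply, eq_comm]
  -- key: ∑ j, p̄ⱼ (Dx v)ⱼ = -λ̄ v.2
  have key : ∀ v : (Fin n → ℝ) × ℝ, ∑ j, pbar j * Dx v j = -lbar * v.2 := by
    intro v
    have hp : ∀ j, pbar j = -(lbar * pderiv1 n f j xbar) := fun j =>
      eq_neg_of_add_eq_zero_left (hcrit j)
    calc ∑ j, pbar j * Dx v j
        = ∑ j, -(lbar * (Dx v j * fderiv ℝ f xbar (Pi.single j 1))) := by
          refine Finset.sum_congr rfl fun j _ => ?_
          rw [hp j]; unfold pderiv1; ring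
      _ = -lbar * ∑ j, Dx v j * fderiv ℝ f xbar (Pi.single j 1) := by
          rw [Finset.mul_sum]; refine Finset.sum_congr rfl fun j _ => by ring
      _ = -lbar * fderiv ℝ f xbar (Dx v) := by rw [← Lsum]
      _ = -lbar * v.2 := by rw [hfx]
  -- derivative of C
  have hxi : ∀ i, HasFDerivAt (fun z => (φ z).2 i)
      ((ContinuousLinearMap.proj i : (Fin n → ℝ) →L[ℝ] ℝ).comp Dx) (pbar, ybar) :=
    fun i => by
      have h := ((ContinuousLinearMap.proj (R := ℝ) (φ := fun _ : Fin n => ℝ) i).hasFDerivAt (x := (φ (pbar, ybar)).2)).comp (pbar, ybar) hx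
      exact h
  set L : Fin n → (((Fin n → ℝ) × ℝ) →L[ℝ] ℝ) := fun i =>
    (ContinuousLinearMap.proj i : (Fin n → ℝ) →L[ℝ] ℝ).comp
      (ContinuousLinearMap.fst ℝ (Fin n → ℝ) ℝ) with hL
  have hpi : ∀ i, HasFDerivAt (fun z : (Fin n → ℝ) × ℝ => z.1 i) (L i) (pbar, ybar) :=
    fun i => (L i).hasFDerivAt
  have hterm : ∀ i, HasFDerivAt (fun z : (Fin n → ℝ) × ℝ => z.1 i * (φ z).2 i)
      (pbar i • ((ContinuousLinearMap.proj i : (Fin n → ℝ) →L[ℝ] ℝ).comp Dx)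
        + xbar i • L i) (pbar, ybar) := by
    intro i
    have h := (hpi i).mul (hxi i)
    simp only [hx2] at h
    exact h
  have hCeq : C = fun z => ∑ i, z.1 i * (φ z).2 i := funext hC
  have hCd : HasFDerivAt C
      (∑ i, (pbar i • ((ContinuousLinearMap.proj i : (Fin n → ℝ) →L[ℝ] ℝ).comp Dx)
        + xbar i • L i)) (pbar, ybar) := by
    rw [hCeq]
    exact HasFDerivAt.fun_sum fun i _ => hterm i
  have hfde := hCd.fderiv
  have heval : ∀ v : (Fin n → ℝ) × ℝ,
      fderiv ℝ C (pbar, ybar) v = ∑ i, (pbar i * Dx v i + xbar i * v.1 i) := by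
    intro v
    rw [hfde]
    simp [ContinuousLinearMap.sum_apply, hL, mul_comm]
  constructor
  · intro i
    rw [heval]
    have hkey := key ((Pi.single i 1 : Fin n → ℝ), (0 : ℝ))
    rw [Finset.sum_add_distrib, hkey]
    simp [Pi.single_apply, mul_ite, Finset.sum_ite_eq']
  · rw [heval]
    have hkey := key ((0 : Fin n → ℝ), (1 : ℝ))
    rw [Finset.sum_add_distrib, hkey]
    simp
end

section
/- Let f : ℝⁿ → ℝ be of class C² in a neighborhood of x̄ with all coordinates positive, suppose p̄ᵢ + λ̄·∂f/∂xᵢ(x̄) = 0 for all i with p̄ having all positive coordinates, f(x̄) = ȳ, and the determinant of the bordered Hessian of f at x̄ is nonzero. Let φ = (λ(·,·), x(·,·)) : V → W be a C¹ map on a neighborhood V of (p̄, ȳ) such that for (p,y) ∈ V, φ(p,y) is the unique point (λ, x) in W satisfying pᵢ + λ·fᵢ(x) = 0 for all i and f(x) = y, and define C(p, y) = Σᵢ pᵢ·xᵢ(p, y). Then C is of class C² in a neighborhood of (p̄, ȳ), and its second partial derivatives satisfy ∂²C/∂pᵢ∂p_j(p̄, ȳ) = ∂xᵢ/∂p_j(p̄,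 ȳ) for all i, j = 1,…,n. -/
open Filter

/-- Any continuous linear functional on `Fin n → ℝ` is determined by its values on basis. -/
lemma clm_apply_eq_sum {n : ℕ} (g : (Fin n → ℝ) →L[ℝ] ℝ) (w : Fin n → ℝ) :
    g w = ∑ i, w i * g (Pi.single i 1) := by
  conv_lhs => rw [pi_eq_sum_univ w]
  rw [map_sum]
  refine Finset.sum_congr rfl fun i _ => ?_
  have h1 : (fun j => if i = j then (1:ℝ) else 0) = Pi.single i 1 := by
    ext j; simp [Pi.single_apply, eq_comm]
  rw [map_smul, h1, smul_eq_mul]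

/-- The linear map `(l, x) ↦ (v ↦ ∑ i, x i * v.1 i - l * v.2)`. -/
noncomputable def Amap (n : ℕ) : (ℝ × (Fin n → ℝ)) →ₗ[ℝ] (((Fin n → ℝ) × ℝ) →L[ℝ] ℝ) where
  toFun q := (∑ i, q.2 i • ((ContinuousLinearMap.proj i).comp
      (ContinuousLinearMap.fst ℝ (Fin n → ℝ) ℝ))) - q.1 • ContinuousLinearMap.snd ℝ (Fin n → ℝ) ℝ
  map_add' a b := by
    ext v <;> simp [Finset.sum_add_distrib, add_smul] <;> ring
  map_smul' c a := by
    ext v <;> simp [Finset.smul_sum, smul_smul, mul_sub, Finset.mul_sum] <;> ring_nf <;> simp [mul_comm, mul_assoc, mul_left_comm]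

lemma Amap_apply {n : ℕ} (q : ℝ × (Fin n → ℝ)) (v : (Fin n → ℝ) × ℝ) :
    Amap n q v = (∑ i, q.2 i * v.1 i) - q.1 * v.2 := by
  simp [Amap]


/-- **the cost function is C² and `C_{ij} = ∂xᵢ/∂p_j`.** -/
theorem cost_function_C2_and_second_derivatives (n : ℕ) (f : (Fin n → ℝ) → ℝ)
    (xbar pbar : Fin n → ℝ) (lbar ybar : ℝ)
    (hxpos : ∀ i, 0 < xbar i) (hppos : ∀ i, 0 < pbar i)
    (hC2 : ∀ᶠ z in nhds xbar, ContDiffAt ℝ 2 f z)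
    (hcrit : ∀ i, pbar i + lbar * pderiv1 n f i xbar = 0)
    (hout : f xbar = ybar)
    (hF : (borderedHessian n f xbar).det ≠ 0)
    (V : Set ((Fin n → ℝ) × ℝ)) (W : Set (ℝ × (Fin n → ℝ)))
    (φ : (Fin n → ℝ) × ℝ → ℝ × (Fin n → ℝ))
    (hV : IsOpen V) (hW : IsOpen W)
    (hVmem : (pbar, ybar) ∈ V) (hWmem : (lbar, xbar) ∈ W)
    (hφ : ContDiffOn ℝ 1 φ V) (hmaps : Set.MapsTo φ V W)
    (huniq : ∀ p y, (p, y) ∈ V → ∀ l x, (l, x) ∈ W →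
      (((∀ i, p i + l * pderiv1 n f i x = 0) ∧ f x = y) ↔ (l, x) = φ (p, y)))
    (C : (Fin n → ℝ) × ℝ → ℝ)
    (hC : ∀ z, C z = ∑ i, z.1 i * (φ z).2 i) :
    (∀ᶠ z in nhds (pbar, ybar), ContDiffAt ℝ 2 C z) ∧
      ∀ i j : Fin n,
        fderiv ℝ (fun z => fderiv ℝ C z (Pi.single i 1, 0)) (pbar, ybar)
            (Pi.single j 1, 0) =
          fderiv ℝ (fun z => (φ z).2 i) (pbar, ybar) (Pi.single j 1, 0) := by
  classical
  have hφbar : φ (pbar, ybar) = (lbar, xbar) :=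
    ((huniq pbar ybar hVmem lbar xbar hWmem).mp ⟨hcrit, hout⟩).symm
  obtain ⟨O, hO, hOopen, hOx⟩ := eventually_nhds_iff.mp hC2
  set U : Set ((Fin n → ℝ) × ℝ) := V ∩ (fun z => (φ z).2) ⁻¹' O with hUdef
  have hUopen : IsOpen U :=
    ContinuousOn.isOpen_inter_preimage (continuous_snd.comp_continuousOn hφ.continuousOn)
      hV hOopen
  have hUmem : (pbar, ybar) ∈ U := ⟨hVmem, by simp [hφbar, hOx]⟩
  have hfoc : ∀ z ∈ U, (∀ i, z.1 i + (φ z).1 * pderiv1 n f i ((φ z).2) = 0) ∧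
      f ((φ z).2) = z.2 := by
    intro z hz
    have h1 := huniq z.1 z.2 hz.1 (φ z).1 (φ z).2 (hmaps hz.1)
    rw [Prod.mk.eta, Prod.mk.eta] at h1
    exact h1.mpr rfl
  set L : (Fin n → ℝ) × ℝ → ((Fin n → ℝ) × ℝ) →L[ℝ] ℝ :=
    fun z => LinearMap.toContinuousLinearMap (Amap n) (φ z) with hLdef
  have hLapp : ∀ z v, L z v = (∑ i, (φ z).2 i * v.1 i) - (φ z).1 * v.2 := by
    intro z v
    exact Amap_apply (φ z) v
  have hLc1 : ∀ z ∈ U, ContDiffAt ℝ 1 L z := by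
    intro z hz
    have hφz : ContDiffAt ℝ 1 φ z := hφ.contDiffAt (hV.mem_nhds hz.1)
    exact ((LinearMap.toContinuousLinearMap (Amap n)).contDiff.contDiffAt).comp z hφz
  have hder : ∀ z ∈ U, HasFDerivAt C (L z) z := by
    intro z hz
    have hfun : C = fun w => ∑ i, w.1 i * (φ w).2 i := funext hC
    have hφz : DifferentiableAt ℝ φ z :=
      (hφ.contDiffAt (hV.mem_nhds hz.1)).differentiableAt one_ne_zero
    have hφder : HasFDerivAt φ (fderiv ℝ φ z) z := hφz.hasFDerivAt
    set Dx : ((Fin n → ℝ) × ℝ) →L[ℝ] (Fin n → ℝ) :=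
      (ContinuousLinearMap.snd ℝ ℝ (Fin n → ℝ)).comp (fderiv ℝ φ z) with hDx
    have hxder : HasFDerivAt (fun w => (φ w).2) Dx z := hφder.snd
    -- chain rule for f ∘ x versus w ↦ w.2
    have hfdiff : DifferentiableAt ℝ f ((φ z).2) :=
      (hO _ hz.2).differentiableAt (by norm_num)
    have hcomp : HasFDerivAt (fun w => f ((φ w).2))
        ((fderiv ℝ f ((φ z).2)).comp Dx) z := hfdiff.hasFDerivAt.comp z hxder
    have heq : (fun w : (Fin n → ℝ) × ℝ => w.2) =ᶠ[nhds z] (fun w => f ((φ w).2)) := by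
      filter_upwards [hUopen.mem_nhds hz] with w hw
      exact ((hfoc w hw).2).symm
    have hsnd : HasFDerivAt (fun w : (Fin n → ℝ) × ℝ => w.2)
        (ContinuousLinearMap.snd ℝ (Fin n → ℝ) ℝ) z := hasFDerivAt_snd
    have hDfDx : (fderiv ℝ f ((φ z).2)).comp Dx = ContinuousLinearMap.snd ℝ (Fin n → ℝ) ℝ :=
      (hcomp.congr_of_eventuallyEq heq).unique hsnd
    have hkey : ∀ v : (Fin n → ℝ) × ℝ, fderiv ℝ f ((φ z).2) (Dx v) = v.2 := fun v =>
      DFunLike.congr_fun hDfDx v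
    -- derivative of each term
    have hterm : ∀ i : Fin n, HasFDerivAt (fun w : (Fin n → ℝ) × ℝ => w.1 i * (φ w).2 i)
        (z.1 i • ((ContinuousLinearMap.proj i).comp Dx) +
          (φ z).2 i • ((ContinuousLinearMap.proj (R := ℝ) (φ := fun _ : Fin n => ℝ) i).comp
            (ContinuousLinearMap.fst ℝ (Fin n → ℝ) ℝ))) z := by
      intro i
      have h1 : HasFDerivAt (fun w : (Fin n → ℝ) × ℝ => w.1 i)
          ((ContinuousLinearMap.proj (R := ℝ) (φ := fun _ : Fin n => ℝ) i).comp
            (ContinuousLinearMap.fst ℝ (Fin n → ℝ) ℝ)) z :=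
        ((ContinuousLinearMap.proj (R := ℝ) (φ := fun _ : Fin n => ℝ) i).comp
            (ContinuousLinearMap.fst ℝ (Fin n → ℝ) ℝ)).hasFDerivAt
      have h2 : HasFDerivAt (fun w : (Fin n → ℝ) × ℝ => (φ w).2 i)
          ((ContinuousLinearMap.proj i).comp Dx) z :=
        (ContinuousLinearMap.proj (R := ℝ) (φ := fun _ : Fin n => ℝ) i).hasFDerivAt.comp z hxder
      exact h1.mul h2
    have hsum := HasFDerivAt.fun_sum (u := Finset.univ) (fun i _ => hterm i)
    rw [hfun]
    refine hsum.congr_fderiv ?_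
    symm
    refine ContinuousLinearMap.ext fun v => ?_
    simp only [ContinuousLinearMap.coe_sum', Finset.sum_apply, ContinuousLinearMap.add_apply,
      ContinuousLinearMap.coe_smul', Pi.smul_apply, ContinuousLinearMap.coe_comp',
      Function.comp_apply, ContinuousLinearMap.proj_apply, ContinuousLinearMap.coe_fst',
      smul_eq_mul]
    rw [hLapp, Finset.sum_add_distrib]
    have hsum2 : ∑ i, z.1 i * Dx v i = -((φ z).1 * v.2) := by
      have h3 : ∀ i : Fin n, z.1 i = -((φ z).1 * pderiv1 n f i ((φ z).2)) := by
        intro i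
        have := (hfoc z hz).1 i
        linarith
      calc ∑ i, z.1 i * Dx v i
          = ∑ i, -((φ z).1 * (Dx v i * pderiv1 n f i ((φ z).2))) := by
            refine Finset.sum_congr rfl fun i _ => ?_
            rw [h3 i]; ring
        _ = -((φ z).1 * ∑ i, Dx v i * pderiv1 n f i ((φ z).2)) := by
            rw [Finset.mul_sum, ← Finset.sum_neg_distrib]
        _ = -((φ z).1 * v.2) := by
            simp only [pderiv1]
            rw [← clm_apply_eq_sum (fderiv ℝ f ((φ z).2)) (Dx v), hkey v]
    rw [hsum2]
    ring
  have hC2C : ∀ z ∈ U, ContDiffAt ℝ 2 C z := by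
    intro z hz
    have h12 : ContDiffAt ℝ ((1 : ℕ) + 1) C z :=
      contDiffAt_succ_iff_hasFDerivAt.mpr
        ⟨L, ⟨U, hUopen.mem_nhds hz, hder⟩, hLc1 z hz⟩
    norm_num at h12
    exact h12
  refine ⟨eventually_nhds_iff.mpr ⟨U, hC2C, hUopen, hUmem⟩, ?_⟩
  intro i j
  have hEq : (fun z => fderiv ℝ C z (Pi.single i 1, 0)) =ᶠ[nhds (pbar, ybar)]
      fun z => (φ z).2 i := by
    filter_upwards [hUopen.mem_nhds hUmem] with z hz
    rw [(hder z hz).fderiv, hLapp]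
    simp [Pi.single_apply, mul_ite, Finset.sum_ite_eq']
  rw [hEq.fderiv_eq]
end

section
/- Let n = 2 and let f : ℝ² → ℝ be of class C² in a neighborhood of x̄ = (x̄₁, x̄₂) with positive coordinates, suppose p̄ᵢ + λ̄·∂f/∂xᵢ(x̄) = 0 for i = 1, 2 with p̄ having positive coordinates, f(x̄) = ȳ, and the determinant of the bordered Hessian of f at x̄ is nonzero. Let C(p, y) = p₁x₁(p,y) + p₂x₂(p,y) be the cost function built from the local critical-point map, and suppose ∂²C/∂p₁∂p₂(p̄, ȳ) ≠ 0 and ∂C/∂p₁(p̄, ȳ), ∂C/∂p₂(p̄, ȳ) are nonzero. Then σ^H_f(x̄) · σ^H_C(p̄, ȳ) = 1, where σ^H_f(x̄) = ((x̄₁f₁ + x̄₂f₂)/(x̄₁x̄₂)) · f₁f₂/(−f₁₁f₂² + 2f₁₂f₁f₂ − f₂₂f₁²) evaluated at x̄, and σ^H_C(p̄, ȳ) = C₁·C₂/(C·C₁₂) evaluated at (p̄, ȳ) (subscripts denoting partial derivatives of C with respect to p₁, p₂). -/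
open Filter

private lemma clm_fin2_expand (g : (Fin 2 → ℝ) →L[ℝ] ℝ) (w : Fin 2 → ℝ) :
    g w = w 0 * g (Pi.single 0 1) + w 1 * g (Pi.single 1 1) := by
  have hw : w = w 0 • (Pi.single 0 1 : Fin 2 → ℝ) + w 1 • (Pi.single 1 1 : Fin 2 → ℝ) := by
    funext k
    fin_cases k <;> simp [Pi.single_apply]
  conv_lhs => rw [hw]
  simp [smul_eq_mul]

private lemma det_bordered (f : (Fin 2 → ℝ) → ℝ) (x : Fin 2 → ℝ) :
    (borderedHessian 2 f x).det =
      -(pderiv2 2 f 1 1 x) * (pderiv1 2 f 0 x)^2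
      + (pderiv2 2 f 0 1 x + pderiv2 2 f 1 0 x) * (pderiv1 2 f 0 x) * (pderiv1 2 f 1 x)
      - pderiv2 2 f 0 0 x * (pderiv1 2 f 1 x)^2 := by
  have e00 : borderedHessian 2 f x 0 0 = 0 := rfl
  have e01 : borderedHessian 2 f x 0 1 = pderiv1 2 f 0 x := rfl
  have e02 : borderedHessian 2 f x 0 2 = pderiv1 2 f 1 x := rfl
  have e10 : borderedHessian 2 f x 1 0 = pderiv1 2 f 0 x := rfl
  have e20 : borderedHessian 2 f x 2 0 = pderiv1 2 f 1 x := rfl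
  have e11 : borderedHessian 2 f x 1 1 = pderiv2 2 f 0 0 x := rfl
  have e12 : borderedHessian 2 f x 1 2 = pderiv2 2 f 0 1 x := rfl
  have e21 : borderedHessian 2 f x 2 1 = pderiv2 2 f 1 0 x := rfl
  have e22 : borderedHessian 2 f x 2 2 = pderiv2 2 f 1 1 x := rfl
  rw [Matrix.det_fin_three, e00, e01, e02, e10, e20, e11, e12, e21, e22]
  ring

private lemma final_algebra (S F0 F1 D lb x0 x1 b P : ℝ)
    (hS : S ≠ 0) (hF0 : F0 ≠ 0) (hF1 : F1 ≠ 0) (hD : D ≠ 0) (hl : lb ≠ 0)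
    (hx0 : x0 ≠ 0) (hx1 : x1 ≠ 0)
    (hbeq : lb * D * b = -(F0 * F1)) (hSP : P = -(lb * S)) :
    S / (x0 * x1) * (F0 * F1 / D) * (x0 * x1 / (P * b)) = 1 := by
  subst hSP
  have hb : b ≠ 0 := by
    intro h; rw [h, mul_zero] at hbeq
    exact mul_ne_zero hF0 hF1 (by linarith)
  rw [div_mul_div_comm, div_mul_div_comm, div_eq_one_iff_eq
    (mul_ne_zero (mul_ne_zero (mul_ne_zero hx0 hx1) hD)
      (mul_ne_zero (neg_ne_zero.mpr (mul_ne_zero hl hS)) hb))]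
  linear_combination (x0 * x1 * S) * hbeq

set_option maxHeartbeats 1000000 in
/-- **relation between the Hicks ES of the production function and of the
cost function, `n = 2`.** `σ^H_f(x̄) · σ^H_C(p̄,ȳ) = 1`. -/
theorem HES_production_cost_reciprocal (f : (Fin 2 → ℝ) → ℝ)
    (xbar pbar : Fin 2 → ℝ) (lbar ybar : ℝ)
    (hxpos : ∀ i, 0 < xbar i) (hppos : ∀ i, 0 < pbar i)
    (hC2 : ∀ᶠ z in nhds xbar, ContDiffAt ℝ 2 f z)
    (hcrit : ∀ i, pbar i + lbar * pderiv1 2 f i xbar = 0)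
    (hout : f xbar = ybar)
    (hF : (borderedHessian 2 f xbar).det ≠ 0)
    (V : Set ((Fin 2 → ℝ) × ℝ)) (W : Set (ℝ × (Fin 2 → ℝ)))
    (φ : (Fin 2 → ℝ) × ℝ → ℝ × (Fin 2 → ℝ))
    (hV : IsOpen V) (hW : IsOpen W)
    (hVmem : (pbar, ybar) ∈ V) (hWmem : (lbar, xbar) ∈ W)
    (hφ : ContDiffOn ℝ 1 φ V) (hmaps : Set.MapsTo φ V W)
    (huniq : ∀ p y, (p, y) ∈ V → ∀ l x, (l, x) ∈ W →
      (((∀ i, p i + l * pderiv1 2 f i x = 0) ∧ f x = y) ↔ (l, x) = φ (p, y)))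
    (C : (Fin 2 → ℝ) × ℝ → ℝ)
    (hC : ∀ z, C z = z.1 0 * (φ z).2 0 + z.1 1 * (φ z).2 1)
    (hC1 : fderiv ℝ C (pbar, ybar) (Pi.single 0 1, 0) ≠ 0)
    (hC2' : fderiv ℝ C (pbar, ybar) (Pi.single 1 1, 0) ≠ 0)
    (hC12 : fderiv ℝ (fun z => fderiv ℝ C z (Pi.single 0 1, 0)) (pbar, ybar)
      (Pi.single 1 1, 0) ≠ 0) :
    (((xbar 0 * pderiv1 2 f 0 xbar + xbar 1 * pderiv1 2 f 1 xbar) / (xbar 0 * xbar 1)) *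
        (pderiv1 2 f 0 xbar * pderiv1 2 f 1 xbar /
          (-(pderiv2 2 f 0 0 xbar) * (pderiv1 2 f 1 xbar) ^ 2 +
            2 * pderiv2 2 f 0 1 xbar * pderiv1 2 f 0 xbar * pderiv1 2 f 1 xbar -
            pderiv2 2 f 1 1 xbar * (pderiv1 2 f 0 xbar) ^ 2))) *
      (fderiv ℝ C (pbar, ybar) (Pi.single 0 1, 0) *
          fderiv ℝ C (pbar, ybar) (Pi.single 1 1, 0) /
        (C (pbar, ybar) *
          fderiv ℝ (fun z => fderiv ℝ C z (Pi.single 0 1, 0)) (pbar, ybar)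
            (Pi.single 1 1, 0))) = 1 := by
    -- Step a : φ at the base point
  have hφzb : φ (pbar, ybar) = (lbar, xbar) :=
    ((huniq pbar ybar hVmem lbar xbar hWmem).mp ⟨hcrit, hout⟩).symm
  -- Step b : open set of C² points
  obtain ⟨U, hUf, hUo, hxbarU⟩ : ∃ U, (∀ y ∈ U, ContDiffAt ℝ 2 f y) ∧ IsOpen U ∧ xbar ∈ U :=
    eventually_nhds_iff.mp hC2
  -- FOC identity on V
  have hFOC : ∀ z ∈ V, (∀ i, z.1 i + (φ z).1 * pderiv1 2 f i (φ z).2 = 0) ∧ f (φ z).2 = z.2 :=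
    fun z hz => (huniq z.1 z.2 hz (φ z).1 (φ z).2 (hmaps hz)).mpr rfl
  -- Step c : the good open set V'
  set V' : Set ((Fin 2 → ℝ) × ℝ) := V ∩ ((fun z => (φ z).2) ⁻¹' U) with hV'def
  have hV'o : IsOpen V' :=
    (continuous_snd.comp_continuousOn hφ.continuousOn).isOpen_inter_preimage hV hUo
  have hzbV' : (pbar, ybar) ∈ V' := ⟨hVmem, by
    simp only [Set.mem_preimage, hφzb]; exact hxbarU⟩
  have hφdiff : ∀ z ∈ V, DifferentiableAt ℝ φ z := fun z hz =>
    (hφ.differentiableOn one_ne_zero).differentiableAt (hV.mem_nhds hz)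
  -- Step: derivative of f ∘ x kills price-directions
  have hkey : ∀ z ∈ V', ∀ v : (Fin 2 → ℝ) × ℝ,
      fderiv ℝ f ((φ z).2) ((fderiv ℝ φ z v).2) = v.2 := by
    intro z hz v
    have hφd := hφdiff z hz.1
    have hfd : DifferentiableAt ℝ f ((φ z).2) :=
      (hUf _ hz.2).differentiableAt (by norm_num)
    have hx : HasFDerivAt (fun w => (φ w).2)
        ((ContinuousLinearMap.snd ℝ ℝ (Fin 2 → ℝ)).comp (fderiv ℝ φ z)) z :=
      ((ContinuousLinearMap.snd ℝ ℝ (Fin 2 → ℝ)).hasFDerivAt).comp z hφd.hasFDerivAt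
    have hcomp : HasFDerivAt (fun w => f ((φ w).2))
        ((fderiv ℝ f ((φ z).2)).comp
          ((ContinuousLinearMap.snd ℝ ℝ (Fin 2 → ℝ)).comp (fderiv ℝ φ z))) z :=
      hfd.hasFDerivAt.comp z hx
    have heq : (fun w => f ((φ w).2)) =ᶠ[nhds z] (fun w : (Fin 2 → ℝ) × ℝ => w.2) := by
      filter_upwards [hV'o.mem_nhds hz] with w hw using (hFOC w hw.1).2
    have h2 : fderiv ℝ (fun w => f ((φ w).2)) z
        = ContinuousLinearMap.snd ℝ (Fin 2 → ℝ) ℝ := by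
      rw [heq.fderiv_eq]; exact fderiv_snd
    have h3 := hcomp.fderiv
    rw [h2] at h3
    have h4 := congrArg (fun (L : ((Fin 2 → ℝ) × ℝ) →L[ℝ] ℝ) => L v) h3
    simpa using h4.symm
  -- Shephard's lemma on V'
  have sheph : ∀ z ∈ V', ∀ j : Fin 2,
      fderiv ℝ C z (Pi.single j 1, (0 : ℝ)) = (φ z).2 j := by
    intro z hz j
    have hφd := hφdiff z hz.1
    have hxc : ∀ k : Fin 2, HasFDerivAt (fun w => (φ w).2 k)
        (((ContinuousLinearMap.proj k).comp
          (ContinuousLinearMap.snd ℝ ℝ (Fin 2 → ℝ))).comp (fderiv ℝ φ z)) z :=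
      fun k => (((ContinuousLinearMap.proj k).comp
        (ContinuousLinearMap.snd ℝ ℝ (Fin 2 → ℝ))).hasFDerivAt).comp z hφd.hasFDerivAt
    have hpc : ∀ k : Fin 2, HasFDerivAt (fun w : (Fin 2 → ℝ) × ℝ => w.1 k)
        ((ContinuousLinearMap.proj k).comp (ContinuousLinearMap.fst ℝ (Fin 2 → ℝ) ℝ)) z :=
      fun k => ((ContinuousLinearMap.proj k).comp
        (ContinuousLinearMap.fst ℝ (Fin 2 → ℝ) ℝ)).hasFDerivAt
    have hCder := (((hpc 0).mul (hxc 0)).add ((hpc 1).mul (hxc 1))).congr_of_eventuallyEq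
      (Eventually.of_forall fun w => hC w)
    rw [hCder.fderiv]
    have hfoc := hFOC z hz.1
    have hg : fderiv ℝ f ((φ z).2) ((fderiv ℝ φ z (Pi.single j 1, (0:ℝ))).2) = 0 := by
      simpa using hkey z hz (Pi.single j 1, (0:ℝ))
    have hexp : fderiv ℝ f ((φ z).2) ((fderiv ℝ φ z (Pi.single j 1, (0:ℝ))).2)
        = (fderiv ℝ φ z (Pi.single j 1, (0:ℝ))).2 0 * pderiv1 2 f 0 ((φ z).2)
          + (fderiv ℝ φ z (Pi.single j 1, (0:ℝ))).2 1 * pderiv1 2 f 1 ((φ z).2) :=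
      clm_fin2_expand _ _
    have h0 := hfoc.1 0
    have h1 := hfoc.1 1
    simp only [ContinuousLinearMap.add_apply, ContinuousLinearMap.smul_apply,
      ContinuousLinearMap.comp_apply, ContinuousLinearMap.coe_fst',
      ContinuousLinearMap.coe_snd', ContinuousLinearMap.proj_apply, smul_eq_mul]
    have hsingle : (φ z).2 0 * (Pi.single j 1 : Fin 2 → ℝ) 0
        + (φ z).2 1 * (Pi.single j 1 : Fin 2 → ℝ) 1 = (φ z).2 j := by
      fin_cases j <;> simp
    linear_combination (fderiv ℝ φ z (Pi.single j 1, (0:ℝ))).2 0 * h0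
      + (fderiv ℝ φ z (Pi.single j 1, (0:ℝ))).2 1 * h1
      + (φ z).1 * hexp - (φ z).1 * hg + hsingle
  -- second derivative of C = derivative of x0
  have hx0der : HasFDerivAt (fun w => (φ w).2 0)
      (((ContinuousLinearMap.proj 0).comp
        (ContinuousLinearMap.snd ℝ ℝ (Fin 2 → ℝ))).comp (fderiv ℝ φ (pbar, ybar))) (pbar, ybar) :=
    (((ContinuousLinearMap.proj 0).comp
      (ContinuousLinearMap.snd ℝ ℝ (Fin 2 → ℝ))).hasFDerivAt).comp _
      (hφdiff _ hVmem).hasFDerivAt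
  have hC12eq : fderiv ℝ (fun z => fderiv ℝ C z (Pi.single 0 1, (0:ℝ))) (pbar, ybar)
      (Pi.single 1 1, (0:ℝ))
      = (fderiv ℝ φ (pbar, ybar) (Pi.single 1 1, (0:ℝ))).2 0 := by
    have hShe : (fun z => fderiv ℝ C z (Pi.single 0 1, (0:ℝ)))
        =ᶠ[nhds (pbar, ybar)] fun z => (φ z).2 0 := by
      filter_upwards [hV'o.mem_nhds hzbV'] with z hz using sheph z hz 0
    rw [hShe.fderiv_eq, hx0der.fderiv]
    simp
  -- differentiability of partial derivatives of f at xbar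
  have hfi_diff : ∀ i : Fin 2, DifferentiableAt ℝ (pderiv1 2 f i) xbar := by
    intro i
    have h := ((hUf xbar hxbarU).fderiv_right (m := 1) (by norm_num)).differentiableAt one_ne_zero
    exact h.clm_apply (differentiableAt_const _)
  -- the implicit system at the base point, direction (e₁, 0)
  have hsys : ∀ i : Fin 2, (Pi.single 1 1 : Fin 2 → ℝ) i
      + pderiv1 2 f i xbar * (fderiv ℝ φ (pbar, ybar) (Pi.single 1 1, (0:ℝ))).1
      + lbar * ((fderiv ℝ φ (pbar, ybar) (Pi.single 1 1, (0:ℝ))).2 0 * pderiv2 2 f 0 i xbar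
        + (fderiv ℝ φ (pbar, ybar) (Pi.single 1 1, (0:ℝ))).2 1 * pderiv2 2 f 1 i xbar) = 0 := by
    intro i
    have hLb : HasFDerivAt φ (fderiv ℝ φ (pbar, ybar)) (pbar, ybar) :=
      (hφdiff _ hVmem).hasFDerivAt
    have h1 : HasFDerivAt (fun w : (Fin 2 → ℝ) × ℝ => w.1 i)
        ((ContinuousLinearMap.proj i).comp (ContinuousLinearMap.fst ℝ (Fin 2 → ℝ) ℝ))
        (pbar, ybar) :=
      ((ContinuousLinearMap.proj i).comp (ContinuousLinearMap.fst ℝ (Fin 2 → ℝ) ℝ)).hasFDerivAt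
    have hl : HasFDerivAt (fun w => (φ w).1)
        ((ContinuousLinearMap.fst ℝ ℝ (Fin 2 → ℝ)).comp (fderiv ℝ φ (pbar, ybar)))
        (pbar, ybar) :=
      ((ContinuousLinearMap.fst ℝ ℝ (Fin 2 → ℝ)).hasFDerivAt).comp _ hLb
    have hx : HasFDerivAt (fun w => (φ w).2)
        ((ContinuousLinearMap.snd ℝ ℝ (Fin 2 → ℝ)).comp (fderiv ℝ φ (pbar, ybar)))
        (pbar, ybar) :=
      ((ContinuousLinearMap.snd ℝ ℝ (Fin 2 → ℝ)).hasFDerivAt).comp _ hLb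
    have hfi : HasFDerivAt (pderiv1 2 f i) (fderiv ℝ (pderiv1 2 f i) xbar)
        ((φ (pbar, ybar)).2) := by
      rw [hφzb]; exact (hfi_diff i).hasFDerivAt
    have hcompi : HasFDerivAt (fun w => pderiv1 2 f i ((φ w).2))
        ((fderiv ℝ (pderiv1 2 f i) xbar).comp
          ((ContinuousLinearMap.snd ℝ ℝ (Fin 2 → ℝ)).comp (fderiv ℝ φ (pbar, ybar))))
        (pbar, ybar) := by exact HasFDerivAt.comp (g := pderiv1 2 f i) (pbar, ybar) hfi hx
    have htot := h1.add (hl.mul hcompi)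
    have heq0 : (fun w : (Fin 2 → ℝ) × ℝ => w.1 i + (φ w).1 * pderiv1 2 f i ((φ w).2))
        =ᶠ[nhds (pbar, ybar)] fun _ => (0:ℝ) := by
      filter_upwards [hV.mem_nhds hVmem] with w hw using (hFOC w hw).1 i
    have hzero : fderiv ℝ (fun w : (Fin 2 → ℝ) × ℝ =>
        w.1 i + (φ w).1 * pderiv1 2 f i ((φ w).2)) (pbar, ybar) = 0 := by
      rw [heq0.fderiv_eq]; exact fderiv_const_apply 0
    have hD := htot.fderiv
    rw [show ((fun w : (Fin 2 → ℝ) × ℝ => w.1 i) + (fun w => (φ w).1) * fun w => pderiv1 2 f i ((φ w).2)) = (fun w : (Fin 2 → ℝ) × ℝ => w.1 i + (φ w).1 * pderiv1 2 f i ((φ w).2)) from rfl, hzero] at hD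
    have h4 := congrArg (fun (L : ((Fin 2 → ℝ) × ℝ) →L[ℝ] ℝ) =>
      L (Pi.single 1 1, (0:ℝ))) hD.symm
    have hexp2 : fderiv ℝ (pderiv1 2 f i) xbar
        ((fderiv ℝ φ (pbar, ybar) (Pi.single 1 1, (0:ℝ))).2)
        = (fderiv ℝ φ (pbar, ybar) (Pi.single 1 1, (0:ℝ))).2 0 * pderiv2 2 f 0 i xbar
          + (fderiv ℝ φ (pbar, ybar) (Pi.single 1 1, (0:ℝ))).2 1 * pderiv2 2 f 1 i xbar :=
      clm_fin2_expand _ _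
    simp only [ContinuousLinearMap.add_apply, ContinuousLinearMap.smul_apply,
      ContinuousLinearMap.comp_apply, ContinuousLinearMap.coe_fst',
      ContinuousLinearMap.coe_snd', ContinuousLinearMap.proj_apply, smul_eq_mul,
      ContinuousLinearMap.zero_apply, hφzb] at h4
    linear_combination h4 - lbar * hexp2
  -- constraint equation at the base point
  have hE2 : pderiv1 2 f 0 xbar * (fderiv ℝ φ (pbar, ybar) (Pi.single 1 1, (0:ℝ))).2 0
      + pderiv1 2 f 1 xbar * (fderiv ℝ φ (pbar, ybar) (Pi.single 1 1, (0:ℝ))).2 1 = 0 := by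
    have h := hkey (pbar, ybar) hzbV' (Pi.single 1 1, (0:ℝ))
    rw [hφzb] at h
    have h' : fderiv ℝ f xbar ((fderiv ℝ φ (pbar, ybar) (Pi.single 1 1, (0:ℝ))).2)
        = 0 := h
    have hexp3 : fderiv ℝ f xbar ((fderiv ℝ φ (pbar, ybar) (Pi.single 1 1, (0:ℝ))).2)
        = (fderiv ℝ φ (pbar, ybar) (Pi.single 1 1, (0:ℝ))).2 0 * pderiv1 2 f 0 xbar
          + (fderiv ℝ φ (pbar, ybar) (Pi.single 1 1, (0:ℝ))).2 1 * pderiv1 2 f 1 xbar :=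
      clm_fin2_expand _ _
    linear_combination h' - hexp3
  -- symmetry of second derivatives
  have hsymm : pderiv2 2 f 0 1 xbar = pderiv2 2 f 1 0 xbar := by
    have hs := (hUf xbar hxbarU).isSymmSndFDerivAt (by simp [minSmoothness_of_isRCLikeNormedField])
    have hdf : DifferentiableAt ℝ (fderiv ℝ f) xbar :=
      ((hUf xbar hxbarU).fderiv_right (m := 1) (by norm_num)).differentiableAt one_ne_zero
    have hflip : ∀ u : Fin 2 → ℝ, fderiv ℝ (fun y => fderiv ℝ f y u) xbar
        = (fderiv ℝ (fderiv ℝ f) xbar).flip u := by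
      intro u
      rw [fderiv_clm_apply hdf (differentiableAt_const _)]
      simp
    have h01 : pderiv2 2 f 0 1 xbar
        = fderiv ℝ (fderiv ℝ f) xbar (Pi.single 0 1) (Pi.single 1 1) := by
      show fderiv ℝ (fun y => fderiv ℝ f y (Pi.single 1 1)) xbar (Pi.single 0 1) = _
      rw [hflip]; rfl
    have h10 : pderiv2 2 f 1 0 xbar
        = fderiv ℝ (fderiv ℝ f) xbar (Pi.single 1 1) (Pi.single 0 1) := by
      show fderiv ℝ (fun y => fderiv ℝ f y (Pi.single 0 1)) xbar (Pi.single 1 1) = _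
      rw [hflip]; rfl
    rw [h01, h10, hs]
  -- values of C and its first derivatives at the base point
  have hC1v : fderiv ℝ C (pbar, ybar) (Pi.single 0 1, (0:ℝ)) = xbar 0 := by
    have h := sheph _ hzbV' 0; rw [hφzb] at h; exact h
  have hC2v : fderiv ℝ C (pbar, ybar) (Pi.single 1 1, (0:ℝ)) = xbar 1 := by
    have h := sheph _ hzbV' 1; rw [hφzb] at h; exact h
  have hCzb : C (pbar, ybar) = pbar 0 * xbar 0 + pbar 1 * xbar 1 := by
    rw [hC, hφzb]
  -- scalar abbreviations
  have h0 := hsys 0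
  have h1 := hsys 1
  rw [show ((Pi.single 1 1 : Fin 2 → ℝ) 0) = 0 by simp [Pi.single_apply]] at h0
  rw [show ((Pi.single 1 1 : Fin 2 → ℝ) 1) = 1 by simp] at h1
  rw [← hsymm] at h0
  -- nonvanishing
  have hl0 : lbar ≠ 0 := by
    intro h; have := hcrit 0; rw [h] at this; simp at this; exact absurd this (hppos 0).ne'
  have hF0 : pderiv1 2 f 0 xbar ≠ 0 := by
    intro h; have := hcrit 0; rw [h] at this; simp at this; exact absurd this (hppos 0).ne'
  have hF1 : pderiv1 2 f 1 xbar ≠ 0 := by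
    intro h; have := hcrit 1; rw [h] at this; simp at this; exact absurd this (hppos 1).ne'
  have hdet : (borderedHessian 2 f xbar).det =
      -(pderiv2 2 f 0 0 xbar) * (pderiv1 2 f 1 xbar) ^ 2 +
        2 * pderiv2 2 f 0 1 xbar * pderiv1 2 f 0 xbar * pderiv1 2 f 1 xbar -
        pderiv2 2 f 1 1 xbar * (pderiv1 2 f 0 xbar) ^ 2 := by
    rw [det_bordered, ← hsymm]; ring
  have hD : -(pderiv2 2 f 0 0 xbar) * (pderiv1 2 f 1 xbar) ^ 2 +
      2 * pderiv2 2 f 0 1 xbar * pderiv1 2 f 0 xbar * pderiv1 2 f 1 xbar -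
      pderiv2 2 f 1 1 xbar * (pderiv1 2 f 0 xbar) ^ 2 ≠ 0 := hdet ▸ hF
  -- solve the linear system for b = ∂x₀/∂p₁
  have hbeq : lbar * (-(pderiv2 2 f 0 0 xbar) * (pderiv1 2 f 1 xbar) ^ 2 +
      2 * pderiv2 2 f 0 1 xbar * pderiv1 2 f 0 xbar * pderiv1 2 f 1 xbar -
      pderiv2 2 f 1 1 xbar * (pderiv1 2 f 0 xbar) ^ 2) *
      (fderiv ℝ φ (pbar, ybar) (Pi.single 1 1, (0:ℝ))).2 0
      = -(pderiv1 2 f 0 xbar * pderiv1 2 f 1 xbar) := by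
    linear_combination (-(pderiv1 2 f 1 xbar)^2) * h0
      + (pderiv1 2 f 0 xbar * pderiv1 2 f 1 xbar) * h1
      + (-(lbar) * (pderiv1 2 f 0 xbar * pderiv2 2 f 1 1 xbar
          - pderiv1 2 f 1 xbar * pderiv2 2 f 0 1 xbar)) * hE2
  have hFF : pderiv1 2 f 0 xbar * pderiv1 2 f 1 xbar ≠ 0 := mul_ne_zero hF0 hF1
  have hb0 : (fderiv ℝ φ (pbar, ybar) (Pi.single 1 1, (0:ℝ))).2 0 ≠ 0 := by
    intro hb; apply hFF; rw [hb, mul_zero] at hbeq; linarith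
  have hlS : lbar * (xbar 0 * pderiv1 2 f 0 xbar + xbar 1 * pderiv1 2 f 1 xbar)
      = -(pbar 0 * xbar 0 + pbar 1 * xbar 1) := by
    linear_combination (xbar 0) * hcrit 0 + (xbar 1) * hcrit 1
  have hP : 0 < pbar 0 * xbar 0 + pbar 1 * xbar 1 := by
    have := mul_pos (hppos 0) (hxpos 0); have := mul_pos (hppos 1) (hxpos 1); linarith
  have hS : xbar 0 * pderiv1 2 f 0 xbar + xbar 1 * pderiv1 2 f 1 xbar ≠ 0 := by
    intro h; rw [h, mul_zero] at hlS; linarith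
  -- conclusion
  have hSP : pbar 0 * xbar 0 + pbar 1 * xbar 1
      = -(lbar * (xbar 0 * pderiv1 2 f 0 xbar + xbar 1 * pderiv1 2 f 1 xbar)) := by
    linarith [hlS]
  rw [hC1v, hC2v, hCzb, hC12eq]
  exact final_algebra _ _ _ _ _ _ _ _ _ hS hF0 hF1 hD hl0
    (hxpos 0).ne' (hxpos 1).ne' hbeq hSP
end

section
/- Let f : ℝ²₊₊ → ℝ be a C² function that is homogeneous of degree 1 (f(t·x) = t·f(x) for all t > 0 and x with positive coordinates). Then at every point x with positive coordinates: (i) x₁f₁₁(x) + x₂f₁₂(x) = 0 and x₁f₂₁(x) + x₂f₂₂(x) = 0; and (ii) if f₁₂(x) ≠ 0 and f(x) ≠ 0, the Hicks elasticity of substitution satisfies σ^H(x) = ((x₁f₁ + x₂f₂)/(x₁x₂)) · f₁f₂/(−f₁₁f₂² + 2f₁₂f₁f₂ − f₂₂f₁²) = f₁(x)f₂(x)/(f(x)·f₁₂(x)). -/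
open Filter


open Filter Topology

lemma apply_decomp (L : (Fin 2 → ℝ) →L[ℝ] ℝ) (x : Fin 2 → ℝ) :
    L x = x 0 * L (Pi.single (0:Fin 2) (1:ℝ)) + x 1 * L (Pi.single (1:Fin 2) (1:ℝ)) := by
  have hx : x = x 0 • (Pi.single 0 1 : Fin 2 → ℝ) + x 1 • (Pi.single 1 1 : Fin 2 → ℝ) := by
    funext i; fin_cases i <;> simp
  conv_lhs => rw [hx]
  simp [smul_eq_mul]

lemma euler1 (g : (Fin 2 → ℝ) → ℝ) (x : Fin 2 → ℝ)
    (hd : DifferentiableAt ℝ g x)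
    (hg : (fun t : ℝ => g (t • x)) =ᶠ[𝓝 (1:ℝ)] fun t => t * g x) :
    fderiv ℝ g x x = g x := by
  have h1 : HasDerivAt (fun t : ℝ => t • x) x 1 := by
    simpa using (hasDerivAt_id (1:ℝ)).smul_const x
  have h2 : HasDerivAt (fun t : ℝ => g (t • x)) (fderiv ℝ g x x) 1 := by
    have hd' : HasFDerivAt g (fderiv ℝ g x) ((1:ℝ) • x) := by
      rw [one_smul]; exact hd.hasFDerivAt
    have := hd'.comp_hasDerivAt (1:ℝ) h1
    exact this
  have h3 : deriv (fun t : ℝ => g (t • x)) 1 = deriv (fun t : ℝ => t * g x) 1 :=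
    hg.deriv_eq
  have h4 : deriv (fun t : ℝ => t * g x) 1 = g x := by
    simpa using ((hasDerivAt_id (1:ℝ)).mul_const (g x)).deriv
  rw [← h2.deriv, h3, h4]

lemma euler0 (g : (Fin 2 → ℝ) → ℝ) (x : Fin 2 → ℝ)
    (hd : DifferentiableAt ℝ g x)
    (hg : (fun t : ℝ => g (t • x)) =ᶠ[𝓝 (1:ℝ)] fun _ => g x) :
    fderiv ℝ g x x = 0 := by
  have h1 : HasDerivAt (fun t : ℝ => t • x) x 1 := by
    simpa using (hasDerivAt_id (1:ℝ)).smul_const x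
  have h2 : HasDerivAt (fun t : ℝ => g (t • x)) (fderiv ℝ g x x) 1 := by
    have hd' : HasFDerivAt g (fderiv ℝ g x) ((1:ℝ) • x) := by
      rw [one_smul]; exact hd.hasFDerivAt
    have := hd'.comp_hasDerivAt (1:ℝ) h1
    exact this
  have h3 : deriv (fun t : ℝ => g (t • x)) 1 = deriv (fun _ : ℝ => g x) 1 :=
    hg.deriv_eq
  rw [← h2.deriv, h3, deriv_const]

/-- **Hicks ES of a linearly homogeneous function of two variables.**
For a `C²` function on the positive orthant homogeneous of degree 1:
(i) `x₁ f₁₁ + x₂ f₁₂ = 0` and `x₁ f₂₁ + x₂ f₂₂ = 0`;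
(ii) if `f₁₂(x) ≠ 0` and `f(x) ≠ 0`, the Hicks elasticity of substitution equals
`f₁ f₂ / (f f₁₂)`. -/
theorem HES_linearly_homogeneous (f : (Fin 2 → ℝ) → ℝ)
    (hC2 : ∀ x : Fin 2 → ℝ, (∀ i, 0 < x i) → ContDiffAt ℝ 2 f x)
    (hhom : ∀ t : ℝ, 0 < t → ∀ x : Fin 2 → ℝ, (∀ i, 0 < x i) → f (t • x) = t * f x)
    (x : Fin 2 → ℝ) (hx : ∀ i, 0 < x i) :
    (x 0 * pderiv2 2 f 0 0 x + x 1 * pderiv2 2 f 0 1 x = 0 ∧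
      x 0 * pderiv2 2 f 1 0 x + x 1 * pderiv2 2 f 1 1 x = 0) ∧
    (pderiv2 2 f 0 1 x ≠ 0 → f x ≠ 0 →
      ((x 0 * pderiv1 2 f 0 x + x 1 * pderiv1 2 f 1 x) / (x 0 * x 1)) *
          (pderiv1 2 f 0 x * pderiv1 2 f 1 x /
            (-(pderiv2 2 f 0 0 x) * (pderiv1 2 f 1 x) ^ 2 +
              2 * pderiv2 2 f 0 1 x * pderiv1 2 f 0 x * pderiv1 2 f 1 x -
              pderiv2 2 f 1 1 x * (pderiv1 2 f 0 x) ^ 2)) =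
        pderiv1 2 f 0 x * pderiv1 2 f 1 x / (f x * pderiv2 2 f 0 1 x)) := by
  -- the positive orthant is open
  set S : Set (Fin 2 → ℝ) := {y | ∀ i, 0 < y i} with hSdef
  have hSopen : IsOpen S := by
    have : S = ⋂ i, {y : Fin 2 → ℝ | 0 < y i} := by ext y; simp [hSdef]
    rw [this]
    exact isOpen_iInter_of_finite fun i =>
      isOpen_lt continuous_const (continuous_apply i)
  have hxS : x ∈ S := hx
  have hSnhds : S ∈ 𝓝 x := hSopen.mem_nhds hxS
  have hdiff : ∀ y ∈ S, DifferentiableAt ℝ f y := fun y hy =>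
    (hC2 y hy).differentiableAt (by norm_num)
  -- membership of `t • x` in `S`
  have htS : ∀ t : ℝ, 0 < t → t • x ∈ S := by
    intro t ht i
    simpa using mul_pos ht (hx i)
  -- the gradient is constant along rays
  have hgrad : ∀ t : ℝ, 0 < t → fderiv ℝ f (t • x) = fderiv ℝ f x := by
    intro t ht
    have h1 : (fun y => f (t • y)) =ᶠ[𝓝 x] fun y => t * f y := by
      filter_upwards [hSnhds] with y hy using hhom t ht y hy
    have h2 : fderiv ℝ (fun y => f (t • y)) x = t • fderiv ℝ f x := by
      rw [h1.fderiv_eq]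
      exact fderiv_const_mul (hdiff x hxS) t
    have hsm : HasFDerivAt (fun y : Fin 2 → ℝ => t • y)
        (t • ContinuousLinearMap.id ℝ (Fin 2 → ℝ)) x :=
      (t • ContinuousLinearMap.id ℝ (Fin 2 → ℝ)).hasFDerivAt
    have h3 : HasFDerivAt (fun y => f (t • y))
        ((fderiv ℝ f (t • x)).comp (t • ContinuousLinearMap.id ℝ (Fin 2 → ℝ))) x :=
      (hdiff (t • x) (htS t ht)).hasFDerivAt.comp x hsm
    have h4 : (fderiv ℝ f (t • x)).comp (t • ContinuousLinearMap.id ℝ (Fin 2 → ℝ))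
        = t • fderiv ℝ f (t • x) := by
      ext v; simp
    have h5 : t • fderiv ℝ f (t • x) = t • fderiv ℝ f x := by
      rw [← h4, ← h2]; exact h3.fderiv.symm
    exact smul_right_injective ((Fin 2 → ℝ) →L[ℝ] ℝ) (ne_of_gt ht) h5
  -- differentiability of the partial derivatives
  have hfder : ContDiffAt ℝ 1 (fderiv ℝ f) x :=
    (hC2 x hxS).fderiv_right (le_refl 2)
  have hpd : ∀ i : Fin 2, DifferentiableAt ℝ (pderiv1 2 f i) x := by
    intro i
    have : DifferentiableAt ℝ
        ((ContinuousLinearMap.apply ℝ ℝ ((Pi.single i 1 : Fin 2 → ℝ))) ∘ fderiv ℝ f) x :=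
      ((ContinuousLinearMap.apply ℝ ℝ ((Pi.single i 1 : Fin 2 → ℝ))).differentiableAt).comp x
        (hfder.differentiableAt one_ne_zero)
    exact this
  -- Euler's identity for `f`
  have hEuler : x 0 * pderiv1 2 f 0 x + x 1 * pderiv1 2 f 1 x = f x := by
    have h := euler1 f x (hdiff x hxS) ?_
    · rw [← h]; exact (apply_decomp (fderiv ℝ f x) x).symm
    · filter_upwards [Ioi_mem_nhds (by norm_num : (0:ℝ) < 1)] with t ht
      exact hhom t ht x hx
  -- Euler's identity for the partials (degree 0)
  have h0 : ∀ i : Fin 2,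
      x 0 * pderiv2 2 f 0 i x + x 1 * pderiv2 2 f 1 i x = 0 := by
    intro i
    have h := euler0 (pderiv1 2 f i) x (hpd i) ?_
    · have := apply_decomp (fderiv ℝ (pderiv1 2 f i) x) x
      rw [h] at this
      simpa [pderiv2, pderiv1] using this.symm
    · filter_upwards [Ioi_mem_nhds (by norm_num : (0:ℝ) < 1)] with t ht
      simp only [pderiv1, hgrad t ht]
  -- symmetry of second derivatives
  have hfd2 : DifferentiableAt ℝ (fderiv ℝ f) x := hfder.differentiableAt one_ne_zero
  have hp2 : ∀ i j : Fin 2,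
      pderiv2 2 f i j x
        = fderiv ℝ (fderiv ℝ f) x ((Pi.single i 1 : Fin 2 → ℝ)) ((Pi.single j 1 : Fin 2 → ℝ)) := by
    intro i j
    have hcomp : HasFDerivAt (pderiv1 2 f j)
        ((ContinuousLinearMap.apply ℝ ℝ ((Pi.single j 1 : Fin 2 → ℝ))).comp
          (fderiv ℝ (fderiv ℝ f) x)) x := by
      have := ((ContinuousLinearMap.apply ℝ ℝ ((Pi.single j 1 : Fin 2 → ℝ))).hasFDerivAt
        (x := fderiv ℝ f x)).comp x hfd2.hasFDerivAt
      exact this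
    simp [pderiv2, pderiv1, hcomp.fderiv]
  have hsym : pderiv2 2 f 0 1 x = pderiv2 2 f 1 0 x := by
    rw [hp2 0 1, hp2 1 0]
    refine second_derivative_symmetric_of_eventually_of_real (f := f) ?_ hfd2.hasFDerivAt _ _
    filter_upwards [hSnhds] with y hy using (hdiff y hy).hasFDerivAt
  -- part (i)
  have hi1 : x 0 * pderiv2 2 f 0 0 x + x 1 * pderiv2 2 f 0 1 x = 0 := by
    rw [hsym]; exact h0 0
  have hi2 : x 0 * pderiv2 2 f 1 0 x + x 1 * pderiv2 2 f 1 1 x = 0 := by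
    rw [← hsym]; exact h0 1
  refine ⟨⟨hi1, hi2⟩, ?_⟩
  -- part (ii)
  intro hp hf
  have hx0 : x 0 ≠ 0 := (hx 0).ne'
  have hx1 : x 1 ≠ 0 := (hx 1).ne'
  set a := pderiv1 2 f 0 x
  set b := pderiv1 2 f 1 x
  set p := pderiv2 2 f 0 1 x
  set p00 := pderiv2 2 f 0 0 x
  set p11 := pderiv2 2 f 1 1 x
  have e2 : x 0 * p + x 1 * p11 = 0 := by rw [hsym]; exact hi2
  have hD : -p00 * b ^ 2 + 2 * p * a * b - p11 * a ^ 2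
      = p * (f x) ^ 2 / (x 0 * x 1) := by
    rw [eq_div_iff (mul_ne_zero hx0 hx1), ← hEuler]
    linear_combination (-(x 1) * b ^ 2) * hi1 + (-(x 0) * a ^ 2) * e2
  rw [hEuler, hD]
  field_simp
end

section
/- Let C : ℝ²₊₊ → ℝ be a C² function that is positively homogeneous of degree 1 in p = (p₁, p₂) (C(t·p) = t·C(p) for all t > 0), and suppose C₁(p) ≠ 0 and C₂(p) ≠ 0 at a point p with positive coordinates. Then the two one-sided Morishima expressions coincide with the Uzawa form: p₁·(C₁₂/C₂ − C₁₁/C₁) = C·C₁₂/(C₁·C₂) = p₂·(C₁₂/C₁ − C₂₂/C₂), all derivatives evaluated at p. -/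
open Filter Topology

/-- **for two factors both Morishima expressions equal the Uzawa form.**
For a `C²` cost function positively homogeneous of degree 1 in the two prices with
`C₁(p) ≠ 0` and `C₂(p) ≠ 0` at a positive price point `p`:
`p₁ (C₁₂/C₂ − C₁₁/C₁) = C C₁₂/(C₁ C₂) = p₂ (C₁₂/C₁ − C₂₂/C₂)`. -/
theorem morishima_eq_uzawa_two_factors (C : (Fin 2 → ℝ) → ℝ)
    (hC2 : ∀ p : Fin 2 → ℝ, (∀ i, 0 < p i) → ContDiffAt ℝ 2 C p)
    (hhom : ∀ t : ℝ, 0 < t → ∀ p : Fin 2 → ℝ, (∀ i, 0 < p i) → C (t • p) = t * C p)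
    (p : Fin 2 → ℝ) (hp : ∀ i, 0 < p i)
    (hC1 : pderiv1 2 C 0 p ≠ 0) (hC2' : pderiv1 2 C 1 p ≠ 0) :
    p 0 * (pderiv2 2 C 0 1 p / pderiv1 2 C 1 p - pderiv2 2 C 0 0 p / pderiv1 2 C 0 p) =
        C p * pderiv2 2 C 0 1 p / (pderiv1 2 C 0 p * pderiv1 2 C 1 p) ∧
      C p * pderiv2 2 C 0 1 p / (pderiv1 2 C 0 p * pderiv1 2 C 1 p) =
        p 1 * (pderiv2 2 C 0 1 p / pderiv1 2 C 0 p -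
          pderiv2 2 C 1 1 p / pderiv1 2 C 1 p) := by
  have hU : IsOpen {q : Fin 2 → ℝ | ∀ i, 0 < q i} := by
    have : {q : Fin 2 → ℝ | ∀ i, 0 < q i} = Set.univ.pi fun _ => Set.Ioi (0:ℝ) := by
      ext q; simp [Set.mem_pi]
    rw [this]; exact isOpen_set_pi Set.finite_univ fun i _ => isOpen_Ioi
  have hdiff : ∀ q : Fin 2 → ℝ, (∀ i, 0 < q i) → DifferentiableAt ℝ C q :=
    fun q hq => (hC2 q hq).differentiableAt (by norm_num)
  -- gradient is 0-homogeneous along rays through p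
  have hgrad : ∀ t : ℝ, 0 < t → fderiv ℝ C (t • p) = fderiv ℝ C p := by
    intro t ht
    have htp : ∀ i, 0 < (t • p) i := fun i => by
      simpa [smul_eq_mul] using mul_pos ht (hp i)
    have hL : HasFDerivAt (fun q : Fin 2 → ℝ => t • q)
        (t • ContinuousLinearMap.id ℝ (Fin 2 → ℝ)) p :=
      (ContinuousLinearMap.id ℝ (Fin 2 → ℝ)).hasFDerivAt.const_smul t
    have hcomp : HasFDerivAt (fun q : Fin 2 → ℝ => C (t • q))
        ((fderiv ℝ C (t • p)).comp (t • ContinuousLinearMap.id ℝ (Fin 2 → ℝ))) p :=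
      (hdiff _ htp).hasFDerivAt.comp p hL
    have heq : (fun q : Fin 2 → ℝ => C (t • q)) =ᶠ[𝓝 p] fun q => t * C q := by
      filter_upwards [hU.mem_nhds hp] with q hq using hhom t ht q hq
    have hcomp' : HasFDerivAt (fun q : Fin 2 → ℝ => t * C q)
        ((fderiv ℝ C (t • p)).comp (t • ContinuousLinearMap.id ℝ (Fin 2 → ℝ))) p :=
      hcomp.congr_of_eventuallyEq heq.symm
    have hmul : HasFDerivAt (fun q : Fin 2 → ℝ => t * C q) (t • fderiv ℝ C p) p := by
      exact (hdiff p hp).hasFDerivAt.const_smul t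
    have huniq := hcomp'.unique hmul
    ext v
    have h1 : fderiv ℝ C (t • p) (t • v) = t * fderiv ℝ C p v := by
      have := congrArg (fun (L : (Fin 2 → ℝ) →L[ℝ] ℝ) => L v) huniq
      simpa [smul_eq_mul] using this
    have h2 : t * fderiv ℝ C (t • p) v = t * fderiv ℝ C p v := by
      rw [← h1, map_smul, smul_eq_mul]
    exact mul_left_cancel₀ (ne_of_gt ht) h2
  have hf'diff : DifferentiableAt ℝ (fderiv ℝ C) p :=
    ((hC2 p hp).fderiv_right (le_refl 2)).differentiableAt one_ne_zero
  have hp_sum : p = ∑ j : Fin 2, p j • (Pi.single j (1:ℝ) : Fin 2 → ℝ) := by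
    have := Finset.univ_sum_single p
    rw [← this]
    congr 1; funext j
    simp [← Pi.single_smul, smul_eq_mul]
  have expand : ∀ (L : (Fin 2 → ℝ) →L[ℝ] ℝ), L p = ∑ j : Fin 2, p j * L (Pi.single j 1) := by
    intro L
    conv_lhs => rw [hp_sum]
    rw [map_sum]
    simp [smul_eq_mul]
  -- Euler degree 1
  have hray : HasDerivAt (fun t : ℝ => t • p) p 1 := by
    simpa using (hasDerivAt_id (1:ℝ)).smul_const p
  have hEuler1 : C p = ∑ j : Fin 2, p j * pderiv1 2 C j p := by
    have h1 : HasDerivAt (fun t : ℝ => C (t • p)) (C p) 1 := by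
      have heq : (fun t : ℝ => C (t • p)) =ᶠ[𝓝 (1:ℝ)] fun t => t * C p := by
        filter_upwards [Ioi_mem_nhds (zero_lt_one)] with t ht using hhom t ht p hp
      have : HasDerivAt (fun t : ℝ => t * C p) (C p) 1 := by
        simpa using (hasDerivAt_id (1:ℝ)).mul_const (C p)
      exact this.congr_of_eventuallyEq heq
    have h2 : HasDerivAt (fun t : ℝ => C (t • p)) (fderiv ℝ C p p) 1 := by
      have hF : HasFDerivAt C (fderiv ℝ C p) ((fun t : ℝ => t • p) 1) := by
        simpa using (hdiff p hp).hasFDerivAt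
      exact hF.comp_hasDerivAt 1 hray
    have := h2.unique h1
    rw [← this, expand]
    rfl
  -- differentiability of partials
  have hgidiff : ∀ i : Fin 2, DifferentiableAt ℝ (fun x => pderiv1 2 C i x) p := by
    intro i
    exact ((ContinuousLinearMap.apply ℝ ℝ (Pi.single i (1:ℝ))).differentiableAt).comp p hf'diff
  -- Euler degree 0
  have hEuler0 : ∀ i : Fin 2, (∑ j : Fin 2, p j * pderiv2 2 C j i p) = 0 := by
    intro i
    have h1 : HasDerivAt (fun t : ℝ => pderiv1 2 C i (t • p)) 0 1 := by
      have heq : (fun t : ℝ => pderiv1 2 C i (t • p)) =ᶠ[𝓝 (1:ℝ)]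
          fun _ => pderiv1 2 C i p := by
        filter_upwards [Ioi_mem_nhds (zero_lt_one)] with t ht
        show fderiv ℝ C (t • p) (Pi.single i 1) = fderiv ℝ C p (Pi.single i 1)
        rw [hgrad t ht]
      exact (hasDerivAt_const (1:ℝ) (pderiv1 2 C i p)).congr_of_eventuallyEq heq
    have h2 : HasDerivAt (fun t : ℝ => pderiv1 2 C i (t • p))
        (fderiv ℝ (fun x => pderiv1 2 C i x) p p) 1 := by
      have hF : HasFDerivAt (fun x => pderiv1 2 C i x)
          (fderiv ℝ (fun x => pderiv1 2 C i x) p) ((fun t : ℝ => t • p) 1) := by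
        simpa using (hgidiff i).hasFDerivAt
      exact hF.comp_hasDerivAt 1 hray
    have hz := h2.unique h1
    calc (∑ j : Fin 2, p j * pderiv2 2 C j i p)
        = fderiv ℝ (fun x => pderiv1 2 C i x) p p := by
          rw [expand]
          rfl
      _ = 0 := hz
  -- Schwarz symmetry
  have hsymm : pderiv2 2 C 0 1 p = pderiv2 2 C 1 0 p := by
    have hs := (hC2 p hp).isSymmSndFDerivAt (by simp [minSmoothness_of_isRCLikeNormedField])
    have hkey : ∀ i j : Fin 2, pderiv2 2 C i j p =
        fderiv ℝ (fderiv ℝ C) p (Pi.single i 1) (Pi.single j 1) := by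
      intro i j
      show fderiv ℝ (fun x => fderiv ℝ C x (Pi.single j 1)) p (Pi.single i 1) = _
      have : (fun x => fderiv ℝ C x (Pi.single j 1)) =
          (ContinuousLinearMap.apply ℝ ℝ (Pi.single j (1:ℝ))) ∘ (fderiv ℝ C) := rfl
      rw [this, fderiv_comp p (ContinuousLinearMap.differentiableAt _) hf'diff,
        ContinuousLinearMap.fderiv]
      rfl
    rw [hkey 0 1, hkey 1 0, hs.eq]
  -- final arithmetic
  have e0 := hEuler0 0
  have e1 := hEuler0 1
  rw [Fin.sum_univ_two] at e0 e1 hEuler1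
  rw [hsymm] at *
  set A := pderiv1 2 C 0 p
  set B := pderiv1 2 C 1 p
  set X := pderiv2 2 C 0 0 p
  set Y := pderiv2 2 C 1 0 p
  set Z := pderiv2 2 C 1 1 p
  constructor
  · field_simp
    linear_combination -(Y*hEuler1 + B*e0)
  · field_simp
    linear_combination Y*hEuler1 + A*e1
end

section
/- Define C : ℝ³₊₊ × (0,∞) → ℝ by C(p₁, p₂, p₃, y) = y·(p₁ + 2·√(p₂·p₃)), and for i ≠ j define σ^M_{ij}(p, y) = pᵢ·(C_{ij}/C_j − C_{ii}/C_i) where subscripts denote partial derivatives with respect to the price variables. Then for every (p, y) ∈ ℝ³₊₊ × (0,∞): σ^M_{12}(p, y) = 0 and σ^M_{21}(p, y) = 1/2. In particular, the Morishima elasticity of substitution is not symmetric. -/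
open Filter

lemma sqrt_comp_deriv (i : Fin 3) (q : Fin 3 → ℝ) (h : 0 < q i) :
    HasFDerivAt (fun v : Fin 3 → ℝ => Real.sqrt (v i))
      ((1 / (2 * Real.sqrt (q i))) • (ContinuousLinearMap.proj i : (Fin 3 → ℝ) →L[ℝ] ℝ)) q :=
  (Real.hasDerivAt_sqrt h.ne').comp_hasFDerivAt q (hasFDerivAt_apply i q)

/-- **Morishima elasticities for the Blackorby–Russell cost function.**
For `C(p,y) = y (p₁ + 2 √(p₂ p₃))`: `σ^M₁₂ = 0` and `σ^M₂₁ = 1/2` at every positive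
`(p, y)`; in particular the Morishima elasticity of substitution is not symmetric. -/
theorem morishima_blackorby_russell (p : Fin 3 → ℝ) (hp : ∀ i, 0 < p i)
    (y : ℝ) (hy : 0 < y)
    (C : (Fin 3 → ℝ) → ℝ)
    (hC : ∀ q, C q = y * (q 0 + 2 * Real.sqrt (q 1 * q 2))) :
    p 0 * (pderiv2 3 C 0 1 p / pderiv1 3 C 1 p -
        pderiv2 3 C 0 0 p / pderiv1 3 C 0 p) = 0 ∧
      p 1 * (pderiv2 3 C 1 0 p / pderiv1 3 C 0 p -
        pderiv2 3 C 1 1 p / pderiv1 3 C 1 p) = 1 / 2 := by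
  have hσ1 : Real.sqrt (p 1) ≠ 0 := (Real.sqrt_pos.mpr (hp 1)).ne'
  have hσ2 : Real.sqrt (p 2) ≠ 0 := (Real.sqrt_pos.mpr (hp 2)).ne'
  -- derivative of C at positive points
  have key : ∀ q : Fin 3 → ℝ, 0 < q 1 → 0 < q 2 →
      HasFDerivAt C
        (y • (ContinuousLinearMap.proj (R := ℝ) (φ := fun _ : Fin 3 => ℝ) 0)
          + (y * Real.sqrt (q 2) / Real.sqrt (q 1)) • ContinuousLinearMap.proj 1
          + (y * Real.sqrt (q 1) / Real.sqrt (q 2)) • ContinuousLinearMap.proj 2) q := by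
    intro q h1 h2
    have s1 := sqrt_comp_deriv 1 q h1
    have s2 := sqrt_comp_deriv 2 q h2
    have hp0 := hasFDerivAt_apply (𝕜 := ℝ) 0 q
    have hprod := s1.mul s2
    have htot := (hp0.add (hprod.const_mul 2)).const_mul y
    have heq : C =ᶠ[nhds q] fun v => y * (v 0 + 2 * (Real.sqrt (v 1) * Real.sqrt (v 2))) := by
      have h1' : ∀ᶠ v in nhds q, 0 < v 1 :=
        (continuous_apply 1).continuousAt.eventually (eventually_gt_nhds h1)
      filter_upwards [h1'] with v hv
      rw [hC v, Real.sqrt_mul hv.le]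
    refine (htot.congr_of_eventuallyEq heq).congr_fderiv ?_
    have hs1 : Real.sqrt (q 1) ≠ 0 := (Real.sqrt_pos.mpr h1).ne'
    have hs2 : Real.sqrt (q 2) ≠ 0 := (Real.sqrt_pos.mpr h2).ne'
    ext v
    simp only [ContinuousLinearMap.add_apply, ContinuousLinearMap.smul_apply,
      ContinuousLinearMap.proj_apply, smul_eq_mul]
    field_simp
    ring
  -- first partials on the open positive set
  have hval : ∀ q : Fin 3 → ℝ, 0 < q 1 → 0 < q 2 →
      pderiv1 3 C 0 q = y ∧
      pderiv1 3 C 1 q = y * Real.sqrt (q 2) * (Real.sqrt (q 1))⁻¹ := by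
    intro q h1 h2
    have h := (key q h1 h2).fderiv
    constructor <;>
    · unfold pderiv1
      rw [h]
      simp [Pi.single_apply, div_eq_mul_inv]
  have hU : ∀ᶠ q in nhds p, 0 < q 1 ∧ 0 < q 2 := by
    filter_upwards [(continuous_apply 1).continuousAt.eventually (eventually_gt_nhds (hp 1)),
      (continuous_apply 2).continuousAt.eventually (eventually_gt_nhds (hp 2))] with q a b
    exact ⟨a, b⟩
  have g0eq : pderiv1 3 C 0 =ᶠ[nhds p] fun _ => y := by
    filter_upwards [hU] with q hq; exact (hval q hq.1 hq.2).1
  have g1eq : pderiv1 3 C 1 =ᶠ[nhds p]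
      fun q => y * Real.sqrt (q 2) * (Real.sqrt (q 1))⁻¹ := by
    filter_upwards [hU] with q hq; exact (hval q hq.1 hq.2).2
  -- second partials
  have h0fd : fderiv ℝ (pderiv1 3 C 0) p = 0 := by
    rw [g0eq.fderiv_eq]; exact fderiv_const_apply y
  have hinv : HasDerivAt (fun x : ℝ => (Real.sqrt x)⁻¹)
      (-(1 / (2 * Real.sqrt (p 1))) / (Real.sqrt (p 1)) ^ 2) (p 1) :=
    (Real.hasDerivAt_sqrt (hp 1).ne').inv hσ1
  have hinvc := hinv.comp_hasFDerivAt p (hasFDerivAt_apply (𝕜 := ℝ) 1 p)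
  have hs2' := (sqrt_comp_deriv 2 p (hp 2)).const_mul y
  have hφ := hs2'.mul hinvc
  have h1fd : fderiv ℝ (pderiv1 3 C 1) p =
      (y * Real.sqrt (p 2)) • ((-(1 / (2 * Real.sqrt (p 1))) / (Real.sqrt (p 1)) ^ 2) •
        (ContinuousLinearMap.proj (R := ℝ) (φ := fun _ : Fin 3 => ℝ) 1))
      + (Real.sqrt (p 1))⁻¹ • (y • ((1 / (2 * Real.sqrt (p 2))) •
        (ContinuousLinearMap.proj (R := ℝ) (φ := fun _ : Fin 3 => ℝ) 2))) :=
    g1eq.fderiv_eq.trans hφ.fderiv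
  have h00 : pderiv2 3 C 0 0 p = 0 := by
    show fderiv ℝ (pderiv1 3 C 0) p (Pi.single 0 1) = 0
    rw [h0fd]; simp
  have h10 : pderiv2 3 C 1 0 p = 0 := by
    show fderiv ℝ (pderiv1 3 C 0) p (Pi.single 1 1) = 0
    rw [h0fd]; simp
  have h01 : pderiv2 3 C 0 1 p = 0 := by
    show fderiv ℝ (pderiv1 3 C 1) p (Pi.single 0 1) = 0
    rw [h1fd]; simp [Pi.single_apply]
  have h11 : pderiv2 3 C 1 1 p =
      (y * Real.sqrt (p 2)) * (-(1 / (2 * Real.sqrt (p 1))) / (Real.sqrt (p 1)) ^ 2) := by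
    show fderiv ℝ (pderiv1 3 C 1) p (Pi.single 1 1) = _
    rw [h1fd]; simp [Pi.single_apply]
  obtain ⟨hv0, hv1⟩ := hval p (hp 1) (hp 2)
  rw [h00, h01, h10, h11, hv0, hv1]
  have hsq : (Real.sqrt (p 1)) ^ 2 = p 1 := Real.sq_sqrt (hp 1).le
  constructor
  · simp
  · rw [hsq]
    field_simp [hy.ne', (hp 1).ne']
    ring
end

section
/- Define f : ℝ³₊₊ → ℝ by f(x₁, x₂, x₃) = min(x₁, √(x₂·x₃)). Then at every point x ∈ ℝ³₊₊ with x₁² ≠ x₂·x₃, f is of class C² in a neighborhood of x and the determinant of the 4×4 bordered Hessian of f at x equals 0. Consequently the Allen elasticity of substitution σ^A_{ij}(x) = ((x₁f₁ + x₂f₂ + x₃f₃)/(xᵢx_j))·(F_{ij}/F) is undefined at every point of ℝ³₊₊. -/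
open Filter

private lemma col_zero_det (f : (Fin 3 → ℝ) → ℝ) (x : Fin 3 → ℝ) (j : Fin 3)
    (hz : ∀ᶠ z in nhds x, pderiv1 3 f j z = 0) :
    (borderedHessian 3 f x).det = 0 := by
  apply Matrix.det_eq_zero_of_column_eq_zero j.succ
  intro i
  induction i using Fin.cases with
  | zero => simpa [borderedHessian] using hz.self_of_nhds
  | succ i' =>
    have h0 : pderiv1 3 f j =ᶠ[nhds x] (fun _ => 0) := hz
    have hd : fderiv ℝ (pderiv1 3 f j) x = fderiv ℝ (fun _ : Fin 3 → ℝ => (0:ℝ)) x :=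
      h0.fderiv_eq
    simp [borderedHessian, pderiv2, pderiv1, hd]


/-- **the Blackorby–Russell production function has a singular bordered
Hessian off the kink curve.** For `f(x₁,x₂,x₃) = min(x₁, √(x₂ x₃))` and every positive
point with `x₁² ≠ x₂ x₃`, `f` is `C²` in a neighborhood of `x` and the determinant of the
`4 × 4` bordered Hessian of `f` at `x` vanishes; hence (together with Statement 15) the
Allen elasticity of substitution is undefined at every point of the positive orthant. -/
theorem blackorby_russell_singular_bordered_hessian (x : Fin 3 → ℝ)
    (hx : ∀ i, 0 < x i) (h : (x 0) ^ 2 ≠ x 1 * x 2) :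
    (∀ᶠ z in nhds x,
        ContDiffAt ℝ 2 (fun w : Fin 3 → ℝ => min (w 0) (Real.sqrt (w 1 * w 2))) z) ∧
      (borderedHessian 3 (fun w : Fin 3 → ℝ => min (w 0) (Real.sqrt (w 1 * w 2))) x).det
        = 0 := by
  set f : (Fin 3 → ℝ) → ℝ := fun w => min (w 0) (Real.sqrt (w 1 * w 2)) with hfdef
  have hprod : 0 < x 1 * x 2 := mul_pos (hx 1) (hx 2)
  have hne : x 0 ≠ Real.sqrt (x 1 * x 2) := by
    intro he
    exact h (by rw [he, Real.sq_sqrt hprod.le])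
  rcases hne.lt_or_gt with hlt | hgt
  · -- below the kink: f = w 0 locally
    set U : Set (Fin 3 → ℝ) := {w | w 0 < Real.sqrt (w 1 * w 2)} with hUdef
    have hUopen : IsOpen U :=
      isOpen_lt (continuous_apply 0)
        (Real.continuous_sqrt.comp ((continuous_apply 1).mul (continuous_apply 2)))
    have hxU : x ∈ U := hlt
    have heq : ∀ z ∈ U, f z = z 0 := fun z hz => min_eq_left (le_of_lt hz)
    have heqz : ∀ z ∈ U, f =ᶠ[nhds z] (fun w => w 0) := fun z hz =>
      eventually_of_mem (hUopen.mem_nhds hz) heq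
    have hproj : (fun w : Fin 3 → ℝ => w 0)
        = ⇑(ContinuousLinearMap.proj (R := ℝ) (φ := fun _ : Fin 3 => ℝ) 0) := rfl
    have hp0 : ∀ z ∈ U, pderiv1 3 f 1 z = 0 := by
      intro z hz
      have hfd : fderiv ℝ f z = fderiv ℝ (fun w : Fin 3 → ℝ => w 0) z := (heqz z hz).fderiv_eq
      rw [pderiv1, hfd, hproj, ContinuousLinearMap.fderiv]
      simp [Pi.single_eq_of_ne]
    constructor
    · filter_upwards [hUopen.mem_nhds hxU] with z hz
      have hc : ContDiffAt ℝ 2 (fun w : Fin 3 → ℝ => w 0) z := by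
        rw [hproj]; exact (ContinuousLinearMap.proj (R := ℝ) (φ := fun _ : Fin 3 => ℝ) 0).contDiff.contDiffAt
      exact hc.congr_of_eventuallyEq (heqz z hz)
    · apply col_zero_det f x 1
      filter_upwards [hUopen.mem_nhds hxU] with z hz
      exact hp0 z hz
  · -- above the kink: f = √(w 1 * w 2) locally
    set U : Set (Fin 3 → ℝ) := {w | Real.sqrt (w 1 * w 2) < w 0 ∧ 0 < w 1 * w 2} with hUdef
    have hUopen : IsOpen U := by
      apply IsOpen.inter
      · exact isOpen_lt
          (Real.continuous_sqrt.comp ((continuous_apply 1).mul (continuous_apply 2)))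
          (continuous_apply 0)
      · exact isOpen_lt continuous_const ((continuous_apply 1).mul (continuous_apply 2))
    have hxU : x ∈ U := ⟨hgt, hprod⟩
    set g : (Fin 3 → ℝ) → ℝ := fun w => Real.sqrt (w 1 * w 2) with hgdef
    have heq : ∀ z ∈ U, f z = g z := fun z hz => min_eq_right (le_of_lt hz.1)
    have heqz : ∀ z ∈ U, f =ᶠ[nhds z] g := fun z hz =>
      eventually_of_mem (hUopen.mem_nhds hz) heq
    have hp0 : ∀ z ∈ U, pderiv1 3 f 0 z = 0 := by
      intro z hz
      have hp1 : HasFDerivAt (fun w : Fin 3 → ℝ => w 1)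
          (ContinuousLinearMap.proj (R := ℝ) (φ := fun _ : Fin 3 => ℝ) 1) z :=
        (ContinuousLinearMap.proj (R := ℝ) (φ := fun _ : Fin 3 => ℝ) 1).hasFDerivAt
      have hp2 : HasFDerivAt (fun w : Fin 3 → ℝ => w 2)
          (ContinuousLinearMap.proj (R := ℝ) (φ := fun _ : Fin 3 => ℝ) 2) z :=
        (ContinuousLinearMap.proj (R := ℝ) (φ := fun _ : Fin 3 => ℝ) 2).hasFDerivAt
      have hq : HasFDerivAt (fun w : Fin 3 → ℝ => w 1 * w 2)
          ((fun w : Fin 3 → ℝ => w 1) z • (ContinuousLinearMap.proj (R := ℝ) (φ := fun _ : Fin 3 => ℝ) 2)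
            + (fun w : Fin 3 → ℝ => w 2) z • (ContinuousLinearMap.proj (R := ℝ) (φ := fun _ : Fin 3 => ℝ) 1)) z :=
        hp1.mul hp2
      have hs : HasDerivAt Real.sqrt (1 / (2 * Real.sqrt (z 1 * z 2))) (z 1 * z 2) :=
        Real.hasDerivAt_sqrt hz.2.ne'
      have hg : HasFDerivAt g ((1 / (2 * Real.sqrt (z 1 * z 2))) •
          ((fun w : Fin 3 → ℝ => w 1) z • (ContinuousLinearMap.proj (R := ℝ) (φ := fun _ : Fin 3 => ℝ) 2)
            + (fun w : Fin 3 → ℝ => w 2) z • (ContinuousLinearMap.proj (R := ℝ) (φ := fun _ : Fin 3 => ℝ) 1))) z :=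
        hs.comp_hasFDerivAt z hq
      have hfz := hg.congr_of_eventuallyEq (heqz z hz)
      rw [pderiv1, hfz.fderiv]
      simp [Pi.single_eq_of_ne]
    constructor
    · filter_upwards [hUopen.mem_nhds hxU] with z hz
      have hgc : ContDiffAt ℝ 2 g z := by
        have hqc : ContDiffAt ℝ 2 (fun w : Fin 3 → ℝ => w 1 * w 2) z :=
          ((ContinuousLinearMap.proj (R := ℝ) (φ := fun _ : Fin 3 => ℝ) 1).contDiff.mul
            (ContinuousLinearMap.proj (R := ℝ) (φ := fun _ : Fin 3 => ℝ) 2).contDiff).contDiffAt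
        exact (Real.contDiffAt_sqrt hz.2.ne').comp z hqc
      exact hgc.congr_of_eventuallyEq (heqz z hz)
    · apply col_zero_det f x 0
      filter_upwards [hUopen.mem_nhds hxU] with z hz
      exact hp0 z hz
end

section
/- Define f : ℝ³₊₊ → ℝ by f(x₁, x₂, x₃) = min(x₁, √(x₂·x₃)). For every p ∈ ℝ³₊₊ and every y > 0, the infimum of p₁x₁ + p₂x₂ + p₃x₃ over the set {x ∈ ℝ³₊₊ : f(x) = y} equals y·(p₁ + 2·√(p₂·p₃)), and this infimum is attained at the point x* = (y, y·√(p₃/p₂), y·√(p₂/p₃)). -/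
lemma br_aux (p : Fin 3 → ℝ) (hp : ∀ i, 0 < p i) (y : ℝ) (hy : 0 < y) :
    Real.sqrt ((y * Real.sqrt (p 2 / p 1)) * (y * Real.sqrt (p 1 / p 2))) = y ∧
    p 1 * (y * Real.sqrt (p 2 / p 1)) = y * Real.sqrt (p 1 * p 2) ∧
    p 2 * (y * Real.sqrt (p 1 / p 2)) = y * Real.sqrt (p 1 * p 2) := by
  have h1 := hp 1; have h2 := hp 2
  have hprod : Real.sqrt (p 2 / p 1) * Real.sqrt (p 1 / p 2) = 1 := by
    rw [← Real.sqrt_mul (by positivity)]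
    rw [show p 2 / p 1 * (p 1 / p 2) = 1 by field_simp]
    exact Real.sqrt_one
  refine ⟨?_, ?_, ?_⟩
  · rw [show (y * Real.sqrt (p 2 / p 1)) * (y * Real.sqrt (p 1 / p 2))
        = y ^ 2 * (Real.sqrt (p 2 / p 1) * Real.sqrt (p 1 / p 2)) by ring, hprod,
      mul_one, Real.sqrt_sq hy.le]
  · rw [show p 1 * (y * Real.sqrt (p 2 / p 1)) = y * (p 1 * Real.sqrt (p 2 / p 1)) by ring]
    congr 1
    rw [← Real.sqrt_sq h1.le, ← Real.sqrt_mul (by positivity)]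
    congr 1; field_simp; linarith [Real.sq_sqrt (sq_nonneg (p 1))]
  · rw [show p 2 * (y * Real.sqrt (p 1 / p 2)) = y * (p 2 * Real.sqrt (p 1 / p 2)) by ring]
    congr 1
    rw [← Real.sqrt_sq h2.le, ← Real.sqrt_mul (by positivity)]
    congr 1; field_simp; linarith [Real.sq_sqrt (sq_nonneg (p 2))]

/-- **the cost function of the Blackorby–Russell example.**
For `f(x₁,x₂,x₃) = min(x₁, √(x₂ x₃))`, positive prices `p` and output `y > 0`, the
infimum of `p₁x₁ + p₂x₂ + p₃x₃` over `{x ∈ ℝ³₊₊ : f(x) = y}` equals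
`y (p₁ + 2 √(p₂ p₃))` and is attained at `x* = (y, y √(p₃/p₂), y √(p₂/p₃))`. -/
theorem blackorby_russell_cost_function (p : Fin 3 → ℝ) (hp : ∀ i, 0 < p i)
    (y : ℝ) (hy : 0 < y) :
    IsLeast {v : ℝ | ∃ x : Fin 3 → ℝ, (∀ i, 0 < x i) ∧
        min (x 0) (Real.sqrt (x 1 * x 2)) = y ∧
        v = p 0 * x 0 + p 1 * x 1 + p 2 * x 2}
      (y * (p 0 + 2 * Real.sqrt (p 1 * p 2))) ∧
    (∀ i, 0 < (![y, y * Real.sqrt (p 2 / p 1), y * Real.sqrt (p 1 / p 2)] : Fin 3 → ℝ) i) ∧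
    min (y : ℝ) (Real.sqrt ((y * Real.sqrt (p 2 / p 1)) * (y * Real.sqrt (p 1 / p 2)))) = y ∧
    p 0 * y + p 1 * (y * Real.sqrt (p 2 / p 1)) + p 2 * (y * Real.sqrt (p 1 / p 2)) =
      y * (p 0 + 2 * Real.sqrt (p 1 * p 2)) := by
  have h0 := hp 0; have h1 := hp 1; have h2 := hp 2
  obtain ⟨hs, hc1, hc2⟩ := br_aux p hp y hy
  have hcost : p 0 * y + p 1 * (y * Real.sqrt (p 2 / p 1)) + p 2 * (y * Real.sqrt (p 1 / p 2)) =
      y * (p 0 + 2 * Real.sqrt (p 1 * p 2)) := by rw [hc1, hc2]; ring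
  have hxstar : ∀ i, 0 < (![y, y * Real.sqrt (p 2 / p 1), y * Real.sqrt (p 1 / p 2)] : Fin 3 → ℝ) i := by
    intro i; fin_cases i
    · simpa using hy
    · simpa using mul_pos hy (Real.sqrt_pos.mpr (div_pos h2 h1))
    · simpa using mul_pos hy (Real.sqrt_pos.mpr (div_pos h1 h2))
  refine ⟨⟨?_, ?_⟩, hxstar, by rw [hs, min_self], hcost⟩
  · exact ⟨![y, y * Real.sqrt (p 2 / p 1), y * Real.sqrt (p 1 / p 2)], hxstar,
      by simpa using (by rw [hs, min_self] : min y (Real.sqrt ((y * Real.sqrt (p 2 / p 1)) * (y * Real.sqrt (p 1 / p 2)))) = y),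
      by simpa using hcost.symm⟩
  · rintro v ⟨x, hx, hmin, rfl⟩
    have hx1p := hx 1; have hx2p := hx 2
    have hx0 : y ≤ x 0 := hmin ▸ min_le_left _ _
    have hx12 : y ≤ Real.sqrt (x 1 * x 2) := hmin ▸ min_le_right _ _
    have hx12sq : y ^ 2 ≤ x 1 * x 2 := by
      have := pow_le_pow_left₀ hy.le hx12 2
      rwa [Real.sq_sqrt (by positivity)] at this
    -- AM-GM: p1 x1 + p2 x2 ≥ 2 √(p1 x1 p2 x2) ≥ 2 √(p1 p2) y
    have key : 2 * Real.sqrt (p 1 * p 2) * y ≤ p 1 * x 1 + p 2 * x 2 := by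
      have h3 : Real.sqrt (p 1 * p 2 * y ^ 2) = Real.sqrt (p 1 * p 2) * y := by
        rw [Real.sqrt_mul (by positivity), Real.sqrt_sq hy.le]
      have h4 : Real.sqrt (p 1 * p 2 * y ^ 2) ≤ Real.sqrt ((p 1 * x 1) * (p 2 * x 2)) := by
        apply Real.sqrt_le_sqrt
        nlinarith [mul_le_mul_of_nonneg_left hx12sq (le_of_lt (mul_pos h1 h2))]
      have h5 : 2 * Real.sqrt ((p 1 * x 1) * (p 2 * x 2)) ≤ p 1 * x 1 + p 2 * x 2 := by
        have hsq := sq_nonneg (Real.sqrt (p 1 * x 1) - Real.sqrt (p 2 * x 2))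
        have e1 : Real.sqrt (p 1 * x 1) ^ 2 = p 1 * x 1 := Real.sq_sqrt (by positivity)
        have e2 : Real.sqrt (p 2 * x 2) ^ 2 = p 2 * x 2 := Real.sq_sqrt (by positivity)
        have e3 : Real.sqrt (p 1 * x 1) * Real.sqrt (p 2 * x 2)
            = Real.sqrt ((p 1 * x 1) * (p 2 * x 2)) :=
          (Real.sqrt_mul (by positivity) _).symm
        nlinarith
      nlinarith
    have : p 0 * y ≤ p 0 * x 0 := by nlinarith
    nlinarith
end

section
/- Define f : ℝ³₊₊ → ℝ by f(x₁, x₂, x₃) = min(x₁, √(x₂·x₃)). For every p ∈ ℝ³₊₊ and every y > 0, every minimizer x ∈ ℝ³₊₊ of p₁x₁ + p₂x₂ + p₃x₃ subject to f(x) = y satisfies x₁ = y and x₂·x₃ = y² (i.e., lies on the curve defined by x₁ − y = 0 and x₂x₃ − y² = 0); moreover the minimizer is unique, namely x* = (y, y·√(p₃/p₂), y·√(p₂/p₃)). -/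
/-- **minimizers in the Blackorby–Russell example lie on the curve
`x₁ = y`, `x₂x₃ = y²`, and are unique.** For `f(x₁,x₂,x₃) = min(x₁, √(x₂ x₃))`,
positive prices `p` and output `y > 0`, every cost minimizer `x ∈ ℝ³₊₊` subject to
`f(x) = y` satisfies `x₁ = y` and `x₂ x₃ = y²`, and equals
`x* = (y, y √(p₃/p₂), y √(p₂/p₃))`. -/
theorem blackorby_russell_minimizer_unique (p : Fin 3 → ℝ) (hp : ∀ i, 0 < p i)
    (y : ℝ) (hy : 0 < y) (x : Fin 3 → ℝ) (hx : ∀ i, 0 < x i)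
    (hfx : min (x 0) (Real.sqrt (x 1 * x 2)) = y)
    (hmin : ∀ z : Fin 3 → ℝ, (∀ i, 0 < z i) →
      min (z 0) (Real.sqrt (z 1 * z 2)) = y →
      p 0 * x 0 + p 1 * x 1 + p 2 * x 2 ≤ p 0 * z 0 + p 1 * z 1 + p 2 * z 2) :
    x 0 = y ∧ x 1 * x 2 = y ^ 2 ∧
      x = ![y, y * Real.sqrt (p 2 / p 1), y * Real.sqrt (p 1 / p 2)] := by
  have hp0 := hp 0; have hp1 := hp 1; have hp2 := hp 2
  have hx0 := hx 0; have hx1 := hx 1; have hx2 := hx 2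
  have hx12 : 0 < x 1 * x 2 := mul_pos hx1 hx2
  set a := Real.sqrt (x 1 * x 2) with ha
  have ha2 : a ^ 2 = x 1 * x 2 := Real.sq_sqrt hx12.le
  have hapos : 0 < a := Real.sqrt_pos.2 hx12
  have hyx0 : y ≤ x 0 := hfx ▸ min_le_left _ _
  have hya : y ≤ a := hfx ▸ min_le_right _ _
  have hp12 : 0 < p 1 * p 2 := mul_pos hp1 hp2
  set q := Real.sqrt (p 1 * p 2) with hq
  have hq2 : q ^ 2 = p 1 * p 2 := Real.sq_sqrt hp12.le
  have hqpos : 0 < q := Real.sqrt_pos.2 hp12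
  have hs1 : 0 < Real.sqrt (p 2 / p 1) := Real.sqrt_pos.2 (div_pos hp2 hp1)
  have hs2 : 0 < Real.sqrt (p 1 / p 2) := Real.sqrt_pos.2 (div_pos hp1 hp2)
  have hs1sq : (Real.sqrt (p 2 / p 1)) ^ 2 = p 2 / p 1 := Real.sq_sqrt (div_pos hp2 hp1).le
  have hs2sq : (Real.sqrt (p 1 / p 2)) ^ 2 = p 1 / p 2 := Real.sq_sqrt (div_pos hp1 hp2).le
  -- the candidate point
  set z : Fin 3 → ℝ := ![y, y * Real.sqrt (p 2 / p 1), y * Real.sqrt (p 1 / p 2)] with hz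
  have hzpos : ∀ i, 0 < z i := by
    intro i; fin_cases i <;> simp [hz] <;> positivity
  have hsprod : Real.sqrt (p 2 / p 1) * Real.sqrt (p 1 / p 2) = 1 := by
    rw [← Real.sqrt_mul (div_pos hp2 hp1).le]
    have : p 2 / p 1 * (p 1 / p 2) = 1 := by field_simp
    rw [this, Real.sqrt_one]
  have hzf : min (z 0) (Real.sqrt (z 1 * z 2)) = y := by
    have h12 : z 1 * z 2 = y ^ 2 := by
      show y * Real.sqrt (p 2 / p 1) * (y * Real.sqrt (p 1 / p 2)) = y ^ 2
      rw [show y * Real.sqrt (p 2 / p 1) * (y * Real.sqrt (p 1 / p 2))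
        = y ^ 2 * (Real.sqrt (p 2 / p 1) * Real.sqrt (p 1 / p 2)) by ring, hsprod, mul_one]
    have : Real.sqrt (z 1 * z 2) = y := by rw [h12, Real.sqrt_sq hy.le]
    rw [this]; show min y y = y; exact min_self y
  -- cost of the candidate
  have hc1 : p 1 * Real.sqrt (p 2 / p 1) = q := by
    have h : p 1 * p 2 = p 1 ^ 2 * (p 2 / p 1) := by field_simp
    rw [hq, h, Real.sqrt_mul (sq_nonneg _), Real.sqrt_sq hp1.le]
  have hc2 : p 2 * Real.sqrt (p 1 / p 2) = q := by
    have h : p 1 * p 2 = p 2 ^ 2 * (p 1 / p 2) := by field_simp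
    rw [hq, h, Real.sqrt_mul (sq_nonneg _), Real.sqrt_sq hp2.le]
  have hcost : p 0 * z 0 + p 1 * z 1 + p 2 * z 2 = p 0 * y + 2 * q * y := by
    show p 0 * y + p 1 * (y * Real.sqrt (p 2 / p 1)) + p 2 * (y * Real.sqrt (p 1 / p 2))
      = p 0 * y + 2 * q * y
    rw [show p 1 * (y * Real.sqrt (p 2 / p 1)) = p 1 * Real.sqrt (p 2 / p 1) * y by ring,
      show p 2 * (y * Real.sqrt (p 1 / p 2)) = p 2 * Real.sqrt (p 1 / p 2) * y by ring,
      hc1, hc2]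
    ring
  have hchain : p 0 * x 0 + p 1 * x 1 + p 2 * x 2 ≤ p 0 * y + 2 * q * y :=
    hcost ▸ hmin z hzpos hzf
  -- AM-GM
  have e : Real.sqrt (p 1 * x 1) * Real.sqrt (p 2 * x 2) = q * a := by
    rw [← Real.sqrt_mul (mul_pos hp1 hx1).le, hq, ha,
      ← Real.sqrt_mul hp12.le]
    ring_nf
  set s := Real.sqrt (p 1 * x 1) with hs
  set t := Real.sqrt (p 2 * x 2) with ht
  have h1 : s ^ 2 = p 1 * x 1 := Real.sq_sqrt (mul_pos hp1 hx1).le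
  have h2 : t ^ 2 = p 2 * x 2 := Real.sq_sqrt (mul_pos hp2 hx2).le
  have hkey : p 1 * x 1 + p 2 * x 2 - 2 * q * a = (s - t) ^ 2 := by
    linear_combination -h1 - h2 + 2 * e
  have hAM : 2 * q * a ≤ p 1 * x 1 + p 2 * x 2 := by
    have := sq_nonneg (s - t); linarith
  -- force equalities
  have hqay : 2 * q * y ≤ 2 * q * a :=
    mul_le_mul_of_nonneg_left hya (by positivity)
  have hx0y : x 0 = y := by
    have h : p 0 * x 0 ≤ p 0 * y := by linarith
    exact le_antisymm ((mul_le_mul_iff_right₀ hp0).mp h) hyx0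
  have hay : a = y := by
    have hc := hchain; rw [hx0y] at hc
    have h : 2 * q * a ≤ 2 * q * y := by linarith
    exact le_antisymm ((mul_le_mul_iff_right₀ (by positivity : (0:ℝ) < 2 * q)).mp h) hya
  have hx1x2 : x 1 * x 2 = y ^ 2 := by rw [← ha2, hay]
  have hAMeq : p 1 * x 1 + p 2 * x 2 = 2 * q * y := by
    have hc := hchain; rw [hx0y] at hc
    have hA := hAM; rw [hay] at hA
    linarith
  have hst0 : (s - t) ^ 2 = 0 := by rw [← hkey, hAMeq, hay]; ring
  have hst : s = t := by
    have := pow_eq_zero_iff (n := 2) (by norm_num) |>.mp hst0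
    linarith [sub_eq_zero.mp this]
  have heq : p 1 * x 1 = p 2 * x 2 := by rw [← h1, ← h2, hst]
  have hx1sq : x 1 ^ 2 = (y * Real.sqrt (p 2 / p 1)) ^ 2 := by
    have h : p 1 * x 1 ^ 2 = p 2 * y ^ 2 := by linear_combination x 1 * heq + p 2 * hx1x2
    have : (y * Real.sqrt (p 2 / p 1)) ^ 2 = y ^ 2 * (p 2 / p 1) := by
      rw [mul_pow, hs1sq]
    rw [this]; field_simp; linarith
  have hx2sq : x 2 ^ 2 = (y * Real.sqrt (p 1 / p 2)) ^ 2 := by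
    have h : p 2 * x 2 ^ 2 = p 1 * y ^ 2 := by linear_combination (- x 2) * heq + p 1 * hx1x2
    have : (y * Real.sqrt (p 1 / p 2)) ^ 2 = y ^ 2 * (p 1 / p 2) := by
      rw [mul_pow, hs2sq]
    rw [this]; field_simp; linarith
  have hx1e : x 1 = y * Real.sqrt (p 2 / p 1) := by
    rw [← Real.sqrt_sq hx1.le, hx1sq, Real.sqrt_sq (by positivity)]
  have hx2e : x 2 = y * Real.sqrt (p 1 / p 2) := by
    rw [← Real.sqrt_sq hx2.le, hx2sq, Real.sqrt_sq (by positivity)]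
  refine ⟨hx0y, hx1x2, ?_⟩
  funext i
  fin_cases i <;> simp [hx0y, hx1e, hx2e, hz]
end
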